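/- arXiv:2505.03014 — 3 statements merged into one kernel-verified Lean document; each statement's English description precedes it below -/
import Mathlib

section
/- For every ε > 0 there exists a positive integer ℓ such that for every rooted graph F and all finite strings a, b of natural numbers, λ₁(F, a0^ℓ) < λ₁(F, a0^ℓ b) + ε. -/
/-- A rooted graph: a finite simple graph with a distinguished root vertex. -/
structure RootedGraph where
  V : Type
  [fintypeV : Fintype V]
  G : SimpleGraph V
  root : V

attribute [instance] RootedGraph.fintypeV

/-- One-step extension of a rooted graph: attach a new path vertex (the new root)
to the old root, together with a clique of `k` new vertices each adjacent to
both the old root and the new path vertex. -/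
def RootedGraph.extend (F : RootedGraph) (k : ℕ) : RootedGraph where
  V := F.V ⊕ Option (Fin k)
  G :=
    { Adj := fun a b =>
        match a, b with
        | Sum.inl u, Sum.inl w => F.G.Adj u w
        | Sum.inl u, Sum.inr _ => u = F.root
        | Sum.inr _, Sum.inl w => w = F.root
        | Sum.inr x, Sum.inr y => x ≠ y
      symm := by
        constructor
        rintro (u | x) (w | y) h
        · exact F.G.adj_symm h
        · exact h
        · exact h
        · exact h.symm
      loopless := by
        constructor
        rintro (u | x) h
        · exact F.G.irrefl h
        · exact h rfl }
  root := Sum.inr none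

/-- The rowing graph `(F, a)`. -/
def RootedGraph.rowing (F : RootedGraph) (a : List ℕ) : RootedGraph :=
  a.foldl RootedGraph.extend F

open scoped Classical in
/-- Adjacency matrix of (the graph of) a rooted graph. -/
noncomputable def RootedGraph.adjMat (F : RootedGraph) : Matrix F.V F.V ℝ :=
  Matrix.of fun u v => if F.G.Adj u v then 1 else 0

/-- The smallest adjacency eigenvalue of a rooted graph. -/
noncomputable def RootedGraph.lam1 (F : RootedGraph) : ℝ :=
  sInf {t : ℝ | ∃ x : F.V → ℝ, x ≠ 0 ∧ F.adjMat.mulVec x = t • x}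

open Matrix

namespace RootedGraph

lemma sum_dp {ι V : Type*} [Fintype V] (s : Finset ι) (f : ι → V → ℝ) (w : V → ℝ) :
    (∑ i ∈ s, f i) ⬝ᵥ w = ∑ i ∈ s, f i ⬝ᵥ w := by
  simp only [dotProduct, Finset.sum_apply, Finset.sum_mul]
  exact Finset.sum_comm

lemma dp_sum {ι V : Type*} [Fintype V] (s : Finset ι) (f : ι → V → ℝ) (w : V → ℝ) :
    w ⬝ᵥ (∑ i ∈ s, f i) = ∑ i ∈ s, w ⬝ᵥ f i := by
  simp only [dotProduct, Finset.sum_apply, Finset.mul_sum]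
  exact Finset.sum_comm

noncomputable def Qf (R : RootedGraph) (x : R.V → ℝ) : ℝ := x ⬝ᵥ (R.adjMat *ᵥ x)

lemma adjMat_isHermitian (R : RootedGraph) : R.adjMat.IsHermitian := by
  ext i j
  simp only [Matrix.conjTranspose_apply, adjMat, Matrix.of_apply, star_trivial]
  rw [SimpleGraph.adj_comm]

lemma sq_sum_pos {V : Type} [Fintype V] (x : V → ℝ) (hx : x ≠ 0) : 0 < x ⬝ᵥ x := by
  rcases Function.ne_iff.1 hx with ⟨i, hi⟩
  have : (0:ℝ) < x i * x i := mul_self_pos.mpr hi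
  classical
  calc (0:ℝ) < x i * x i := this
  _ ≤ ∑ j, x j * x j := Finset.single_le_sum (f := fun j => x j * x j)
      (fun j _ => mul_self_nonneg _) (Finset.mem_univ i)
  _ = x ⬝ᵥ x := rfl

lemma lam1_spec (R : RootedGraph) :
    (∃ x : R.V → ℝ, x ≠ 0 ∧ R.adjMat *ᵥ x = R.lam1 • x) ∧
    (∀ z : R.V → ℝ, R.lam1 * (z ⬝ᵥ z) ≤ R.Qf z) := by
  classical
  have hA := R.adjMat_isHermitian
  haveI : Nonempty R.V := ⟨R.root⟩
  set B := hA.eigenvectorBasis with hB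
  set ev := hA.eigenvalues with hev
  obtain ⟨i₀, -, hmin⟩ := Finset.exists_min_image Finset.univ ev ⟨Classical.arbitrary _, Finset.mem_univ _⟩
  -- orthonormality in dotProduct form
  have horth : ∀ i j, (B i : R.V → ℝ) ⬝ᵥ (B j : R.V → ℝ) = if i = j then 1 else 0 := by
    intro i j
    have := B.orthonormal
    rw [orthonormal_iff_ite] at this
    have h2 := this i j
    rw [EuclideanSpace.inner_eq_star_dotProduct] at h2
    rw [dotProduct_comm]
    simpa using h2
  -- Rayleigh lower bound by the minimum eigenvalue
  have ray : ∀ z : R.V → ℝ, ev i₀ * (z ⬝ᵥ z) ≤ z ⬝ᵥ (R.adjMat *ᵥ z) := by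
    intro z
    set c : R.V → ℝ := fun i => B.repr (WithLp.toLp 2 z) i with hc
    set φ : R.V → R.V → ℝ := fun i => (B i : R.V → ℝ) with hφ
    have horth' : ∀ i j, φ i ⬝ᵥ φ j = if i = j then 1 else 0 := horth
    have hz : z = ∑ i, c i • φ i := by
      have := congrArg (WithLp.ofLp (p := 2)) (B.sum_repr (WithLp.toLp 2 z))
      simp only [WithLp.ofLp_toLp, WithLp.ofLp_sum, WithLp.ofLp_smul] at this
      exact this.symm
    have key : ∀ j, R.adjMat *ᵥ φ j = ev j • φ j := fun j => hA.mulVec_eigenvectorBasis j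
    have hAz : R.adjMat *ᵥ z = ∑ i, (c i * ev i) • φ i := by
      conv_lhs => rw [hz]
      rw [← Matrix.mulVecLin_apply, map_sum]
      apply Finset.sum_congr rfl
      intro i _
      rw [LinearMap.map_smul, Matrix.mulVecLin_apply, key i, smul_smul, mul_comm]
    have hdot : z ⬝ᵥ (R.adjMat *ᵥ z) = ∑ i, ev i * (c i)^2 := by
      rw [hAz]
      conv_lhs => rw [hz]
      rw [sum_dp]
      rw [Finset.sum_congr rfl (fun i _ => dp_sum _ _ _)]
      simp only [smul_dotProduct, dotProduct_smul, horth', smul_eq_mul,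
        mul_ite, mul_one, mul_zero, Finset.sum_ite_eq, Finset.mem_univ, if_true]
      apply Finset.sum_congr rfl
      intro i _
      ring
    have hnorm : z ⬝ᵥ z = ∑ i, (c i)^2 := by
      conv_lhs => rw [hz]
      rw [sum_dp]
      rw [Finset.sum_congr rfl (fun i _ => dp_sum _ _ _)]
      simp only [smul_dotProduct, dotProduct_smul, horth', smul_eq_mul,
        mul_ite, mul_one, mul_zero, Finset.sum_ite_eq, Finset.mem_univ, if_true]
      apply Finset.sum_congr rfl
      intro i _
      ring
    rw [hdot, hnorm, Finset.mul_sum]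
    apply Finset.sum_le_sum
    intro i _
    exact mul_le_mul_of_nonneg_right (hmin i (Finset.mem_univ i)) (sq_nonneg _)
  -- the min eigenvalue is in the set
  have hmem : ev i₀ ∈ {t : ℝ | ∃ x : R.V → ℝ, x ≠ 0 ∧ R.adjMat.mulVec x = t • x} := by
    refine ⟨(B i₀ : R.V → ℝ), ?_, hA.mulVec_eigenvectorBasis i₀⟩
    intro h0
    exact B.orthonormal.ne_zero i₀ (by ext j; exact congrFun h0 j)
  have hlb : ∀ t ∈ {t : ℝ | ∃ x : R.V → ℝ, x ≠ 0 ∧ R.adjMat.mulVec x = t • x}, ev i₀ ≤ t := by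
    rintro t ⟨x, hx, hxe⟩
    have h1 : ev i₀ * (x ⬝ᵥ x) ≤ t * (x ⬝ᵥ x) := by
      calc ev i₀ * (x ⬝ᵥ x) ≤ x ⬝ᵥ (R.adjMat *ᵥ x) := ray x
      _ = t * (x ⬝ᵥ x) := by rw [hxe, dotProduct_smul]; simp [mul_comm]
    exact le_of_mul_le_mul_right h1 (sq_sum_pos x hx)
  have hsInf : R.lam1 = ev i₀ := by
    refine le_antisymm (csInf_le ⟨ev i₀, hlb⟩ hmem) (le_csInf ⟨_, hmem⟩ hlb)
  constructor
  · refine ⟨(B i₀ : R.V → ℝ), ?_, ?_⟩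
    · intro h0
      exact B.orthonormal.ne_zero i₀ (by ext j; exact congrFun h0 j)
    · rw [hsInf]; exact hA.mulVec_eigenvectorBasis i₀
  · intro z
    rw [hsInf]
    exact ray z

end RootedGraph


open scoped Classical

namespace RootedGraph

lemma dp_self_nonneg {V : Type} [Fintype V] (x : V → ℝ) : 0 ≤ x ⬝ᵥ x :=
  Finset.sum_nonneg fun i _ => mul_self_nonneg _

lemma dp_self_eq_sum_sq {V : Type} [Fintype V] (x : V → ℝ) : x ⬝ᵥ x = ∑ v, (x v)^2 := by
  simp [dotProduct, sq]

lemma Qf_expand (R : RootedGraph) (x : R.V → ℝ) :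
    R.Qf x = ∑ a, ∑ b, (if R.G.Adj a b then (1:ℝ) else 0) * (x a * x b) := by
  rw [show R.Qf x = ∑ a, x a * ∑ b, R.adjMat a b * x b from rfl]
  refine Finset.sum_congr rfl fun a _ => ?_
  rw [Finset.mul_sum]
  refine Finset.sum_congr rfl fun b _ => ?_
  rw [show R.adjMat a b = if R.G.Adj a b then (1:ℝ) else 0 from rfl]
  split_ifs <;> ring

lemma extend_adj_inl_inl (R : RootedGraph) (k : ℕ) (u v : R.V) :
    (R.extend k).G.Adj (Sum.inl u) (Sum.inl v) = R.G.Adj u v := propext Iff.rfl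

lemma extend_adj_inl_inr (R : RootedGraph) (k : ℕ) (u : R.V) (t : Option (Fin k)) :
    (R.extend k).G.Adj (Sum.inl u) (Sum.inr t) = (u = R.root) := propext Iff.rfl

lemma extend_adj_inr_inl (R : RootedGraph) (k : ℕ) (u : R.V) (t : Option (Fin k)) :
    (R.extend k).G.Adj (Sum.inr t) (Sum.inl u) = (u = R.root) := propext Iff.rfl

lemma extend_adj_inr_inr (R : RootedGraph) (k : ℕ) (t s : Option (Fin k)) :
    (R.extend k).G.Adj (Sum.inr t) (Sum.inr s) = (t ≠ s) := propext Iff.rfl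

lemma offdiag_sum {β : Type} [Fintype β] [DecidableEq β] (g : β → ℝ) :
    ∑ t, ∑ s, (if t ≠ s then g t * g s else 0) = (∑ t, g t)^2 - ∑ t, (g t)^2 := by
  have h : ∀ t s : β, (if t ≠ s then g t * g s else (0:ℝ))
      = g t * g s - (if t = s then g t * g s else 0) := by
    intro t s
    by_cases h : t = s <;> simp [h]
  rw [Finset.sum_congr rfl fun t (_ : t ∈ Finset.univ) =>
    Finset.sum_congr rfl fun s (_ : s ∈ Finset.univ) => h t s]
  rw [Finset.sum_congr rfl fun t (_ : t ∈ Finset.univ) => Finset.sum_sub_distrib _ _]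
  rw [Finset.sum_sub_distrib]
  congr 1
  · rw [sq, Finset.sum_mul_sum]
  · refine Finset.sum_congr rfl fun t _ => ?_
    simp [Finset.sum_ite_eq, sq]

lemma Qf_extend (R : RootedGraph) (k : ℕ) (w : (R.extend k).V → ℝ) :
    (R.extend k).Qf w = R.Qf (w ∘ Sum.inl)
      + (w (Sum.inl R.root) + ∑ t : Option (Fin k), w (Sum.inr t))^2
      - (w (Sum.inl R.root))^2 - ∑ t : Option (Fin k), (w (Sum.inr t))^2 := by
  have e1 : (R.extend k).Qf w = ∑ a : R.V ⊕ Option (Fin k), ∑ b : R.V ⊕ Option (Fin k),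
      (if (R.extend k).G.Adj a b then (1:ℝ) else 0) * (w a * w b) := Qf_expand _ w
  rw [e1, Qf_expand]
  simp only [Fintype.sum_sum_type, extend_adj_inl_inl, extend_adj_inl_inr,
    extend_adj_inr_inl, extend_adj_inr_inr]
  rw [Finset.sum_add_distrib, Finset.sum_add_distrib]
  have od := offdiag_sum (fun t => w (Sum.inr t))
  beta_reduce at od
  simp only [ite_mul, one_mul, zero_mul, Finset.sum_ite_irrel, Finset.sum_const_zero,
    Finset.sum_ite_eq', Finset.mem_univ, if_true,
    ← Finset.sum_mul, ← Finset.mul_sum, Function.comp]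
  linear_combination od

lemma n2_extend (R : RootedGraph) (k : ℕ) (w : (R.extend k).V → ℝ) :
    w ⬝ᵥ w = (w ∘ Sum.inl) ⬝ᵥ (w ∘ Sum.inl) + ∑ t : Option (Fin k), (w (Sum.inr t))^2 := by
  rw [show (w ⬝ᵥ w) = ∑ i : R.V ⊕ Option (Fin k), w i * w i from rfl, Fintype.sum_sum_type]
  simp [dotProduct, Function.comp, sq]

def emb : (c : List ℕ) → (R : RootedGraph) → R.V → (R.rowing c).V
  | [], _ => id
  | k :: c, R => fun u => emb c (R.extend k) (Sum.inl u)

lemma emb_nil (R : RootedGraph) (u : R.V) : emb [] R u = u := rfl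

lemma emb_cons (k : ℕ) (c : List ℕ) (R : RootedGraph) (u : R.V) :
    emb (k :: c) R u = emb c (R.extend k) (Sum.inl u) := rfl

lemma rowing_nil (R : RootedGraph) : R.rowing [] = R := rfl

lemma rowing_cons (R : RootedGraph) (k : ℕ) (c : List ℕ) :
    R.rowing (k :: c) = (R.extend k).rowing c := rfl

lemma rowing_append (R : RootedGraph) (c d : List ℕ) :
    R.rowing (c ++ d) = (R.rowing c).rowing d :=
  List.foldl_append

lemma emb_injective : ∀ (c : List ℕ) (R : RootedGraph), Function.Injective (emb c R)
  | [], R => fun a b h => h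
  | k :: c, R => fun a b h => by
      have := emb_injective c (R.extend k) h
      exact Sum.inl_injective this

lemma exists_ext0 : ∀ (c : List ℕ) (R : RootedGraph) (x : R.V → ℝ),
    ∃ x' : (R.rowing c).V → ℝ, (R.rowing c).Qf x' = R.Qf x ∧ (x' ⬝ᵥ x') = x ⬝ᵥ x ∧
      (x ≠ 0 → x' ≠ 0)
  | [], R, x => ⟨x, rfl, rfl, id⟩
  | k :: c, R, x => by
      set x₁ : (R.extend k).V → ℝ := Sum.elim x 0 with hx₁
      have hci : x₁ ∘ Sum.inl = x := rfl
      have h1 : (R.extend k).Qf x₁ = R.Qf x := by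
        rw [Qf_extend, hci]
        simp [hx₁]
      have h2 : x₁ ⬝ᵥ x₁ = x ⬝ᵥ x := by
        rw [n2_extend, hci]
        simp [hx₁]
      have h3 : x ≠ 0 → x₁ ≠ 0 := by
        intro hx h0
        apply hx
        funext i
        exact congrFun h0 (Sum.inl i)
      obtain ⟨x', e1, e2, e3⟩ := exists_ext0 c (R.extend k) x₁
      exact ⟨x', e1.trans h1, e2.trans h2, fun hx => e3 (h3 hx)⟩

lemma lam1_rowing_le (R : RootedGraph) (c : List ℕ) : (R.rowing c).lam1 ≤ R.lam1 := by
  obtain ⟨x, hx0, hxe⟩ := R.lam1_spec.1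
  obtain ⟨x', e1, e2, e3⟩ := exists_ext0 c R x
  have h := (R.rowing c).lam1_spec.2 x'
  rw [e1, e2] at h
  have hq : R.Qf x = R.lam1 * (x ⬝ᵥ x) := by
    unfold Qf
    rw [hxe, dotProduct_smul, smul_eq_mul]
  rw [hq] at h
  exact le_of_mul_le_mul_right h (sq_sum_pos x hx0)

lemma n2_emb_le : ∀ (c : List ℕ) (R : RootedGraph) (y : (R.rowing c).V → ℝ),
    (y ∘ emb c R) ⬝ᵥ (y ∘ emb c R) ≤ y ⬝ᵥ y
  | [], R, y => le_rfl
  | k :: c, R, y => by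
      have ih := n2_emb_le c (R.extend k) y
      refine le_trans ?_ ih
      have : (y ∘ emb (k :: c) R) = (y ∘ emb c (R.extend k)) ∘ Sum.inl := rfl
      rw [this]
      have h2 := n2_extend (R := R) (k := k) (w := y ∘ emb c (R.extend k))
      have : 0 ≤ ∑ t : Option (Fin k), ((y ∘ emb c (R.extend k)) (Sum.inr t))^2 :=
        Finset.sum_nonneg fun t _ => sq_nonneg _
      exact (le_add_of_nonneg_right this).trans (le_of_eq h2.symm)

lemma glue : ∀ (c : List ℕ) (R : RootedGraph) (y : (R.rowing c).V → ℝ),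
    R.Qf (y ∘ emb c R) - 2*((y ⬝ᵥ y) - ((y ∘ emb c R) ⬝ᵥ (y ∘ emb c R)))
      - (y (emb c R R.root))^2 + (y ((R.rowing c).root))^2 ≤ (R.rowing c).Qf y
  | [], R, y => by
      simp only [emb_nil]
      have h1 : (y ∘ emb [] R) = y := rfl
      rw [h1]
      have : (R.rowing []).root = R.root := rfl
      rw [this]
      have : (R.rowing []).Qf y = R.Qf y := rfl
      rw [this]
      ring_nf
      exact le_of_eq (sub_add_cancel _ _)
  | k :: c, R, y => by
      have ih := glue c (R.extend k) y
      set w : (R.extend k).V → ℝ := y ∘ emb c (R.extend k) with hw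
      have hQ := Qf_extend R k w
      have hn := n2_extend R k w
      have hcomp : w ∘ Sum.inl = y ∘ emb (k :: c) R := rfl
      rw [hcomp] at hQ hn
      have hroot : (R.extend k).root = Sum.inr none := rfl
      have hsq : (w (Sum.inr (none : Option (Fin k))))^2
          ≤ ∑ t : Option (Fin k), (w (Sum.inr t))^2 :=
        Finset.single_le_sum (f := fun t => (w (Sum.inr t))^2)
          (fun t _ => sq_nonneg _) (Finset.mem_univ none)
      have hS : 0 ≤ (w (Sum.inl R.root) + ∑ t : Option (Fin k), w (Sum.inr t))^2 :=
        sq_nonneg _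
      have hrr : (R.rowing (k :: c)).root = ((R.extend k).rowing c).root := rfl
      have hQQ : (R.rowing (k :: c)).Qf y = ((R.extend k).rowing c).Qf y := rfl
      rw [hQQ, hrr]
      have hwr : w ((R.extend k).root) = w (Sum.inr none) := rfl
      have hwemb : y (emb c (R.extend k) ((R.extend k).root)) = w (Sum.inr none) := by
        rw [hw]; rfl
      rw [hwemb] at ih
      have hembk : (y (emb (k :: c) R R.root))^2 = (w (Sum.inl R.root))^2 := by
        rw [hw, emb_cons]; rfl
      rw [hembk]
      -- combine
      have ih' : (R.extend k).Qf w - 2*(y ⬝ᵥ y - w ⬝ᵥ w) - w (Sum.inr none)^2 + y (((R.extend k).rowing c).root)^2 ≤ ((R.extend k).rowing c).Qf y := ih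
      nlinarith [ih', hQ, hn, hsq, hS]

lemma percut (c : List ℕ) (R : RootedGraph) (y : (R.rowing c).V → ℝ) (L : ℝ)
    (hL : L ≤ R.lam1) :
    L * (y ⬝ᵥ y) - max 0 (L+2) * (y ⬝ᵥ y) - (y (emb c R R.root))^2
      ≤ (R.rowing c).Qf y := by
  have hglue := glue c R y
  have hray := R.lam1_spec.2 (y ∘ emb c R)
  set s := (y ∘ emb c R) ⬝ᵥ (y ∘ emb c R) with hs
  set n := y ⬝ᵥ y with hn
  have hs0 : 0 ≤ s := dp_self_nonneg _
  have hsn : s ≤ n := n2_emb_le c R y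
  have hn0 : 0 ≤ n := dp_self_nonneg _
  have hroot : 0 ≤ (y ((R.rowing c).root))^2 := sq_nonneg _
  have h1 : L * s ≤ R.lam1 * s := mul_le_mul_of_nonneg_right hL hs0
  rcases le_or_gt (L + 2) 0 with h | h
  · have hm : max 0 (L+2) = 0 := max_eq_left h
    rw [hm]
    nlinarith
  · have hm : max 0 (L+2) = L + 2 := max_eq_right h.le
    rw [hm]
    nlinarith

end RootedGraph

namespace RootedGraph

lemma main_est (m : ℕ) : ∀ (b : List ℕ) (R : RootedGraph)
    (y : (R.rowing (List.replicate m 0 ++ b)).V → ℝ),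
    ∃ S : Finset (R.rowing (List.replicate m 0 ++ b)).V,
      S.card = m + 1 ∧
      (∀ u : R.V, u ≠ R.root → emb (List.replicate m 0 ++ b) R u ∉ S) ∧
      ((∑ v ∈ S, (y v)^2) +
        ∑ u ∈ Finset.univ.erase R.root, (y (emb (List.replicate m 0 ++ b) R u))^2
          ≤ y ⬝ᵥ y) ∧
      (∀ v ∈ S, (R.rowing (List.replicate m 0)).lam1 * (y ⬝ᵥ y)
          - max 0 ((R.rowing (List.replicate m 0)).lam1 + 2) * (y ⬝ᵥ y) - (y v)^2
          ≤ (R.rowing (List.replicate m 0 ++ b)).Qf y) := by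
  induction m with
  | zero =>
    intro b R y
    simp only [List.replicate_zero, List.nil_append]
    refine ⟨{emb b R R.root}, Finset.card_singleton _, ?_, ?_, ?_⟩
    · intro u hu hmem
      rw [Finset.mem_singleton] at hmem
      exact hu (emb_injective b R hmem)
    · rw [Finset.sum_singleton]
      have h1 : (y (emb b R R.root))^2 +
          ∑ u ∈ Finset.univ.erase R.root, (y (emb b R u))^2
          = ∑ u : R.V, (y (emb b R u))^2 := by
        rw [← Finset.add_sum_erase Finset.univ (fun u => (y (emb b R u))^2)
          (Finset.mem_univ R.root)]
      rw [h1, dp_self_eq_sum_sq]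
      have him : ∑ v ∈ Finset.univ.image (emb b R), (y v)^2
          = ∑ u : R.V, (y (emb b R u))^2 :=
        Finset.sum_image (fun a _ c _ h => emb_injective b R h)
      rw [← him]
      exact Finset.sum_le_sum_of_subset_of_nonneg (Finset.subset_univ _)
        (fun _ _ _ => sq_nonneg _)
    · intro v hv
      rw [Finset.mem_singleton] at hv
      subst hv
      exact percut b R y _ le_rfl
  | succ m ih =>
    intro b R y
    set y' : ((R.extend 0).rowing (List.replicate m 0 ++ b)).V → ℝ := y with hy'
    show ∃ S : Finset ((R.extend 0).rowing (List.replicate m 0 ++ b)).V,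
      S.card = m + 1 + 1 ∧
      (∀ u : R.V, u ≠ R.root →
          emb (List.replicate m 0 ++ b) (R.extend 0) (Sum.inl u) ∉ S) ∧
      ((∑ v ∈ S, (y' v)^2) +
          ∑ u ∈ Finset.univ.erase R.root,
            (y' (emb (List.replicate m 0 ++ b) (R.extend 0) (Sum.inl u)))^2 ≤ y' ⬝ᵥ y') ∧
      (∀ v ∈ S, ((R.extend 0).rowing (List.replicate m 0)).lam1 * (y' ⬝ᵥ y')
          - max 0 (((R.extend 0).rowing (List.replicate m 0)).lam1 + 2) * (y' ⬝ᵥ y')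
          - (y' v)^2 ≤ ((R.extend 0).rowing (List.replicate m 0 ++ b)).Qf y')
    obtain ⟨S, hcard, havoid, hsum, hest⟩ := ih b (R.extend 0) y'
    set w0 : ((R.extend 0).rowing (List.replicate m 0 ++ b)).V :=
      emb (List.replicate m 0 ++ b) (R.extend 0) (Sum.inl R.root) with hw0
    have hw0S : w0 ∉ S := havoid (Sum.inl R.root) (by simp [RootedGraph.extend])
    refine ⟨insert w0 S, ?_, ?_, ?_, ?_⟩
    · rw [Finset.card_insert_of_notMem hw0S, hcard]
    · intro u hu hmem
      rw [Finset.mem_insert] at hmem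
      rcases hmem with h | h
      · exact hu (Sum.inl_injective (emb_injective _ (R.extend 0) h))
      · exact havoid (Sum.inl u) (by simp [RootedGraph.extend]) h
    · rw [Finset.sum_insert hw0S]
      have key : (y' w0)^2 + ∑ u ∈ Finset.univ.erase R.root,
          (y' (emb (List.replicate m 0 ++ b) (R.extend 0) (Sum.inl u)))^2
          ≤ ∑ u ∈ (Finset.univ : Finset (R.extend 0).V).erase ((R.extend 0).root),
              (y' (emb (List.replicate m 0 ++ b) (R.extend 0) u))^2 := by
        have h1 : (y' w0)^2 + ∑ u ∈ Finset.univ.erase R.root,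
            (y' (emb (List.replicate m 0 ++ b) (R.extend 0) (Sum.inl u)))^2
            = ∑ u : R.V, (y' (emb (List.replicate m 0 ++ b) (R.extend 0) (Sum.inl u)))^2 := by
          rw [← Finset.add_sum_erase Finset.univ
            (fun u => (y' (emb (List.replicate m 0 ++ b) (R.extend 0) (Sum.inl u)))^2)
            (Finset.mem_univ R.root)]
        rw [h1]
        set f : (R.extend 0).V → ℝ :=
          fun u' => (y' (emb (List.replicate m 0 ++ b) (R.extend 0) u'))^2 with hf
        have hsplit : ∑ u' : (R.extend 0).V, f u'
            = f ((R.extend 0).root) + ∑ u' ∈ Finset.univ.erase ((R.extend 0).root), f u' :=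
          (Finset.add_sum_erase _ f (Finset.mem_univ _)).symm
        have htype : ∑ u' : (R.extend 0).V, f u'
            = ∑ u : R.V, f (Sum.inl u) + ∑ t : Option (Fin 0), f (Sum.inr t) := by
          rw [show (∑ u' : (R.extend 0).V, f u')
            = ∑ u' : R.V ⊕ Option (Fin 0), f u' from rfl, Fintype.sum_sum_type]
        have hopt : ∑ t : Option (Fin 0), f (Sum.inr t) = f (Sum.inr none) := by
          rw [Fintype.sum_option]
          simp
        have : ∑ u : R.V, f (Sum.inl u)
            = ∑ u' ∈ Finset.univ.erase ((R.extend 0).root), f u' := by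
          have hre : f ((R.extend 0).root) = f (Sum.inr none) := rfl
          linarith [htype, hsplit, hopt, hre]
        rw [← this]
      linarith [hsum, key]
    · intro v hv
      rw [Finset.mem_insert] at hv
      rcases hv with h | h
      · subst h
        exact percut (List.replicate (m+1) 0 ++ b) R y _
          (lam1_rowing_le R (List.replicate (m+1) 0))
      · exact hest v h

lemma alt_exists (m : ℕ) : ∀ (R : RootedGraph) (x : R.V → ℝ),
    ∃ x' : (R.rowing (List.replicate m 0)).V → ℝ,
      (R.rowing (List.replicate m 0)).Qf x' = R.Qf x - 2*m*(x R.root)^2 ∧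
      x' ⬝ᵥ x' = x ⬝ᵥ x + m*(x R.root)^2 ∧
      (x' ((R.rowing (List.replicate m 0)).root))^2 = (x R.root)^2 ∧
      (x ≠ 0 → x' ≠ 0) := by
  induction m with
  | zero =>
    intro R x
    refine ⟨x, by simp [rowing_nil], by simp; rfl, by simp [rowing_nil], id⟩
  | succ m ih =>
    intro R x
    set x₁ : (R.extend 0).V → ℝ := Sum.elim x (fun _ => -(x R.root)) with hx₁
    have hci : x₁ ∘ Sum.inl = x := rfl
    have hroot : x₁ ((R.extend 0).root) = -(x R.root) := rfl
    have hsum0 : ∑ t : Option (Fin 0), x₁ (Sum.inr t) = -(x R.root) := by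
      simp [hx₁]
    have hsumsq : ∑ t : Option (Fin 0), (x₁ (Sum.inr t))^2 = (x R.root)^2 := by
      simp [hx₁]
    have h1 : (R.extend 0).Qf x₁ = R.Qf x - 2*(x R.root)^2 := by
      rw [Qf_extend, hci, hsum0, hsumsq]
      have : x₁ (Sum.inl R.root) = x R.root := rfl
      rw [this]
      ring
    have h2 : x₁ ⬝ᵥ x₁ = x ⬝ᵥ x + (x R.root)^2 := by
      rw [n2_extend, hci, hsumsq]
    have h3 : x ≠ 0 → x₁ ≠ 0 := by
      intro hx h0
      exact hx (funext fun i => congrFun h0 (Sum.inl i))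
    obtain ⟨x', e1, e2, e3, e4⟩ := ih (R.extend 0) x₁
    have hroote : (x₁ ((R.extend 0).root))^2 = (x R.root)^2 := by
      rw [hroot]; ring
    refine ⟨x', ?_, ?_, ?_, fun hx => e4 (h3 hx)⟩
    · show ((R.extend 0).rowing (List.replicate m 0)).Qf x'
        = R.Qf x - 2*(((m+1 : ℕ)):ℝ)*(x R.root)^2
      rw [e1, h1, hroote]
      push_cast
      ring
    · show x' ⬝ᵥ x' = x ⬝ᵥ x + (((m+1 : ℕ)):ℝ)*(x R.root)^2
      rw [e2, h2, hroote]
      push_cast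
      ring
    · show (x' (((R.extend 0).rowing (List.replicate m 0)).root))^2 = (x R.root)^2
      rw [e3, hroote]

lemma lam1_replicate_le (m : ℕ) (R : RootedGraph) :
    (R.rowing (List.replicate m 0)).lam1 * (m+1) ≤ -2*m := by
  classical
  set x : R.V → ℝ := fun v => if v = R.root then 1 else 0 with hx
  have hx0 : x ≠ 0 := by
    intro h
    have := congrFun h R.root
    simp [hx] at this
  have hq : R.Qf x = 0 := by
    rw [Qf_expand]
    apply Finset.sum_eq_zero
    intro a _
    apply Finset.sum_eq_zero
    intro b _
    rcases eq_or_ne a R.root with rfl | ha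
    · rcases eq_or_ne b R.root with rfl | hb
      · simp [SimpleGraph.irrefl]
      · simp [hx, hb]
    · simp [hx, ha]
  have hn : x ⬝ᵥ x = 1 := by
    rw [dp_self_eq_sum_sq]
    have h1 : ∀ v, (x v)^2 = if v = R.root then (1:ℝ) else 0 := by
      intro v
      by_cases h : v = R.root <;> simp [hx, h]
    rw [Finset.sum_congr rfl fun v _ => h1 v]
    simp
  obtain ⟨x', e1, e2, e3, e4⟩ := alt_exists m R x
  have hray := (R.rowing (List.replicate m 0)).lam1_spec.2 x'
  rw [e1, e2, hq, hn] at hray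
  have hxr : (x R.root)^2 = 1 := by simp [hx]
  rw [hxr] at hray
  calc (R.rowing (List.replicate m 0)).lam1 * (m+1)
      = (R.rowing (List.replicate m 0)).lam1 * (1 + m*1) := by ring
    _ ≤ 0 - 2*m*1 := hray
    _ = -2*m := by ring

end RootedGraph


/-- For every `ε > 0` there exists a positive integer `ℓ` such that for every rooted
graph `F` and all finite strings `a, b` of natural numbers,
`λ₁(F, a0^ℓ) < λ₁(F, a0^ℓb) + ε`. -/
theorem lam1_rowing_zeros_lt (ε : ℝ) (hε : 0 < ε) :
    ∃ ℓ : ℕ, 0 < ℓ ∧ ∀ (F : RootedGraph) (a b : List ℕ),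
      (F.rowing (a ++ List.replicate ℓ 0)).lam1 <
        (F.rowing (a ++ List.replicate ℓ 0 ++ b)).lam1 + ε := by
  refine ⟨Nat.ceil (3/ε) + 1, Nat.succ_pos _, ?_⟩
  intro F a b
  set ℓ : ℕ := Nat.ceil (3/ε) + 1 with hℓ
  rw [List.append_assoc]
  rw [RootedGraph.rowing_append F a (List.replicate ℓ 0 ++ b),
    RootedGraph.rowing_append F a (List.replicate ℓ 0)]
  set R : RootedGraph := F.rowing a with hR
  set L : ℝ := (R.rowing (List.replicate ℓ 0)).lam1 with hL
  set μ : ℝ := (R.rowing (List.replicate ℓ 0 ++ b)).lam1 with hμ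
  obtain ⟨y, hy0, hyE⟩ := (R.rowing (List.replicate ℓ 0 ++ b)).lam1_spec.1
  set n : ℝ := y ⬝ᵥ y with hn
  have hnpos : 0 < n := RootedGraph.sq_sum_pos y hy0
  have hq : (R.rowing (List.replicate ℓ 0 ++ b)).Qf y = μ * n := by
    unfold RootedGraph.Qf
    rw [hyE, dotProduct_smul, smul_eq_mul]
  obtain ⟨S, hcard, -, hsum, hest⟩ := RootedGraph.main_est ℓ b R y
  have hS1 : ∑ v ∈ S, (y v)^2 ≤ n := by
    have h2 : 0 ≤ ∑ u ∈ Finset.univ.erase R.root,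
        (y (RootedGraph.emb (List.replicate ℓ 0 ++ b) R u))^2 :=
      Finset.sum_nonneg fun _ _ => sq_nonneg _
    linarith [hsum]
  have hSne : S.Nonempty := Finset.card_pos.mp (by rw [hcard]; omega)
  have hlpos : (0:ℝ) < (ℓ:ℝ) + 1 := by positivity
  have hv : ∃ v ∈ S, (y v)^2 * ((ℓ:ℝ)+1) ≤ n := by
    by_contra hcon
    push_neg at hcon
    have hlt : ∀ v ∈ S, n/((ℓ:ℝ)+1) < (y v)^2 := by
      intro v hvS
      have := hcon v hvS
      rw [div_lt_iff₀ hlpos]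
      nlinarith
    have hbig := Finset.sum_lt_sum_of_nonempty hSne hlt
    rw [Finset.sum_const, hcard] at hbig
    have heq : ((ℓ+1 : ℕ) : ℝ) * (n/((ℓ:ℝ)+1)) = n := by
      push_cast
      field_simp
    rw [nsmul_eq_mul, heq] at hbig
    linarith [hS1, hbig]
  obtain ⟨v, hvS, hvle⟩ := hv
  have hEst := hest v hvS
  rw [hq] at hEst
  have hmax : max 0 (L + 2) ≤ 2/((ℓ:ℝ)+1) := by
    have hrep := RootedGraph.lam1_replicate_le ℓ R
    rw [max_le_iff]
    constructor
    · positivity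
    · rw [le_div_iff₀ hlpos]
      nlinarith
  have h3 : L * n - (2/((ℓ:ℝ)+1)) * n - n/((ℓ:ℝ)+1) ≤ μ * n := by
    have hyv : (y v)^2 ≤ n/((ℓ:ℝ)+1) := by
      rw [le_div_iff₀ hlpos]
      linarith
    have hmaxn : (max 0 (L+2)) * n ≤ (2/((ℓ:ℝ)+1)) * n :=
      mul_le_mul_of_nonneg_right hmax hnpos.le
    linarith [hEst]
  have h4 : L - 3/((ℓ:ℝ)+1) ≤ μ := by
    by_contra h
    push_neg at h
    have : μ * n < (L - 3/((ℓ:ℝ)+1)) * n := mul_lt_mul_of_pos_right h hnpos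
    have hsplit : (L - 3/((ℓ:ℝ)+1)) * n = L * n - (2/((ℓ:ℝ)+1)) * n - n/((ℓ:ℝ)+1) := by
      field_simp
      ring
    linarith [h3]
  have h5 : 3/((ℓ:ℝ)+1) < ε := by
    rw [div_lt_iff₀ hlpos]
    have hceil : 3/ε ≤ (Nat.ceil (3/ε) : ℝ) := Nat.le_ceil _
    have hc2 : ((Nat.ceil (3/ε) : ℕ) : ℝ) ≤ (ℓ:ℝ) := by
      rw [hℓ]
      push_cast
      linarith
    have hgt : 3/ε < (ℓ:ℝ) + 1 := by linarith
    have h30 : ε * (3/ε) = 3 := by field_simp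
    nlinarith [hgt, hε, h30]
  linarith [h4, h5]
end

section
/- For each i ∈ {1,2,3}, the limit λ₁(F_i, 0^∞) := lim_{n→∞} λ₁(F_i, 0ⁿ) is strictly less than -2. -/
/-- `F₁`: the path on 4 vertices `u₁u₂u₃u₄` rooted at `u₃`. -/
def F1 : RootedGraph := { V := Fin 4, G := SimpleGraph.pathGraph 4, root := 2 }

/-- `F₂`: the fan consisting of a path `p₁p₂p₃p₄` (vertices `0,1,2,3`) together with an
apex `r` (vertex `4`) adjacent to `p₁, p₂, p₃, p₄`, rooted at the apex `r`. -/
def F2 : RootedGraph :=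
  { V := Fin 5,
    G := SimpleGraph.fromRel fun i j => (i.val + 1 = j.val ∧ j.val ≤ 3) ∨ i.val = 4,
    root := 4 }

/-- `F₃`: the path on 6 vertices `w₁w₂w₃w₄w₅w₆` rooted at `w₅`. -/
def F3 : RootedGraph := { V := Fin 6, G := SimpleGraph.pathGraph 6, root := 4 }

open scoped Classical in
lemma adjMat_apply_aux (F : RootedGraph) (i j : F.V) :
    F.adjMat i j = if F.G.Adj i j then 1 else 0 := rfl

lemma lam1_le_ray (F : RootedGraph) (x : F.V → ℝ) (hx : x ≠ 0) (c : ℝ)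
    (h : dotProduct x (F.adjMat.mulVec x) ≤ c * dotProduct x x) :
    F.lam1 ≤ c := by
  classical
  have hxx : (0:ℝ) < dotProduct x x := by
    rcases Function.ne_iff.mp hx with ⟨i, hi⟩
    have : (0:ℝ) < x i * x i := mul_self_pos.mpr hi
    calc (0:ℝ) < x i * x i := this
      _ ≤ dotProduct x x := by
        unfold dotProduct
        exact Finset.single_le_sum (f := fun j => x j * x j)
          (fun j _ => mul_self_nonneg _) (Finset.mem_univ i)
  have hA : F.adjMat.IsHermitian := by
    unfold Matrix.IsHermitian
    ext u v
    simp [RootedGraph.adjMat, Matrix.conjTranspose_apply, F.G.adj_comm]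
  have hT : (Matrix.toEuclideanLin F.adjMat).IsSymmetric :=
    Matrix.isHermitian_iff_isSymmetric.mp hA
  set T : EuclideanSpace ℝ F.V →ₗ[ℝ] EuclideanSpace ℝ F.V := Matrix.toEuclideanLin F.adjMat with hTdef
  set x' : EuclideanSpace ℝ F.V := (WithLp.equiv 2 (F.V → ℝ)).symm x with hx'def
  have hx'app : ∀ i, x' i = x i := fun _ => rfl
  have hx'0 : x' ≠ 0 := by
    simpa [hx'def] using hx
  haveI : Nontrivial (EuclideanSpace ℝ F.V) := ⟨x', 0, hx'0⟩
  -- operator norm bound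
  set Tc : EuclideanSpace ℝ F.V →L[ℝ] EuclideanSpace ℝ F.V := LinearMap.toContinuousLinearMap T with hTc
  have hTcT : ∀ y, Tc y = T y := fun y => rfl
  -- rayleigh quotients bounded below
  have hbdd : ∀ y : EuclideanSpace ℝ F.V, -‖Tc‖ ≤ (inner ℝ (T y) y : ℝ) / ‖y‖ ^ 2 := by
    intro y
    rcases eq_or_ne y 0 with rfl | hy
    · simp [norm_nonneg]
    · rw [le_div_iff₀ (pow_pos (norm_pos_iff.mpr hy) 2)]
      have h1 : |(inner ℝ (T y) y : ℝ)| ≤ ‖Tc‖ * ‖y‖ ^ 2 := by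
        calc |(inner ℝ (T y) y : ℝ)| ≤ ‖T y‖ * ‖y‖ := abs_real_inner_le_norm _ _
          _ ≤ (‖Tc‖ * ‖y‖) * ‖y‖ := by
              have := Tc.le_opNorm y
              rw [hTcT] at this
              exact mul_le_mul_of_nonneg_right this (norm_nonneg _)
          _ = ‖Tc‖ * ‖y‖ ^ 2 := by ring
      nlinarith [neg_abs_le (inner ℝ (T y) y : ℝ)]
  have hμ := hT.hasEigenvalue_iInf_of_finiteDimensional
  set μ : ℝ := ⨅ y : { y : EuclideanSpace ℝ F.V // y ≠ 0 }, (RCLike.re (inner ℝ (T y.1) y.1 : ℝ)) / ‖(y : EuclideanSpace ℝ F.V)‖ ^ 2 with hμdef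
  -- μ is an eigenvalue
  obtain ⟨v, hv⟩ := hμ.exists_hasEigenvector
  have hv0 : v ≠ 0 := hv.right
  have hveq : F.adjMat.mulVec (WithLp.equiv 2 (F.V → ℝ) v) = μ • (WithLp.equiv 2 (F.V → ℝ) v) := by
    have := hv.apply_eq_smul
    exact congrArg (WithLp.equiv 2 (F.V → ℝ)) this
  have hμmem : μ ∈ {t : ℝ | ∃ y : F.V → ℝ, y ≠ 0 ∧ F.adjMat.mulVec y = t • y} := by
    refine ⟨WithLp.equiv 2 (F.V → ℝ) v, ?_, hveq⟩
    simpa using hv0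
  -- bddBelow of the eigenvalue set
  have hSbdd : BddBelow {t : ℝ | ∃ y : F.V → ℝ, y ≠ 0 ∧ F.adjMat.mulVec y = t • y} := by
    refine ⟨-‖Tc‖, fun t ht => ?_⟩
    obtain ⟨y, hy0, hy⟩ := ht
    set y' : EuclideanSpace ℝ F.V := (WithLp.equiv 2 (F.V → ℝ)).symm y with hy'def
    have hy'0 : y' ≠ 0 := by simpa [hy'def] using hy0
    have hTy : T y' = t • y' := by
      show Matrix.toEuclideanLin F.adjMat ((WithLp.equiv 2 (F.V → ℝ)).symm y) = _
      show WithLp.toLp 2 (F.adjMat.mulVec y) = _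
      rw [hy]
      rfl
    have h1 : |t| * ‖y'‖ ≤ ‖Tc‖ * ‖y'‖ := by
      have := Tc.le_opNorm y'
      rw [hTcT, hTy] at this
      simpa [norm_smul, abs_mul] using this
    have h2 : |t| ≤ ‖Tc‖ := le_of_mul_le_mul_right h1 (norm_pos_iff.mpr hy'0)
    linarith [neg_abs_le t]
  have hle1 : F.lam1 ≤ μ := csInf_le hSbdd hμmem
  -- μ ≤ rayleigh at x'
  have hray : (inner ℝ (T x') x' : ℝ) / ‖x'‖ ^ 2 ≤ c := by
    have hinner : (inner ℝ (T x') x' : ℝ) = dotProduct x (F.adjMat.mulVec x) := by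
      rw [hTdef]
      rw [show T x' = (WithLp.equiv 2 (F.V → ℝ)).symm (F.adjMat.mulVec x) from rfl]
      simp [PiLp.inner_apply, dotProduct, hx'app, mul_comm]
    have hnorm : ‖x'‖ ^ 2 = dotProduct x x := by
      rw [← real_inner_self_eq_norm_sq]
      simp only [PiLp.inner_apply, dotProduct, hx'app, RCLike.inner_apply, conj_trivial]
    rw [hinner, hnorm, div_le_iff₀ hxx]
    exact h
  have hle2 : μ ≤ (inner ℝ (T x') x' : ℝ) / ‖x'‖ ^ 2 := by
    have : BddBelow (Set.range fun y : { y : EuclideanSpace ℝ F.V // y ≠ 0 } =>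
        (RCLike.re (inner ℝ (T y.1) y.1 : ℝ)) / ‖(y : EuclideanSpace ℝ F.V)‖ ^ 2) := by
      refine ⟨-‖Tc‖, fun r hr => ?_⟩
      obtain ⟨y, rfl⟩ := hr
      simpa using hbdd y.1
    have := ciInf_le this ⟨x', hx'0⟩
    simpa [hμdef] using this
  linarith

lemma ext_forms (F : RootedGraph) (k : ℕ) (x : F.V → ℝ) :
    ∃ y : (F.extend k).V → ℝ,
      (x ≠ 0 → y ≠ 0) ∧
      dotProduct y y = dotProduct x x ∧
      dotProduct y ((F.extend k).adjMat.mulVec y) =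
        dotProduct x (F.adjMat.mulVec x) := by
  classical
  refine ⟨Sum.elim x 0, ?_, ?_, ?_⟩
  · intro hx hy
    apply hx; funext i
    have := congrFun hy (Sum.inl i)
    exact this
  · show ∑ i : F.V ⊕ Option (Fin k), Sum.elim x 0 i * Sum.elim x 0 i = _
    simp [dotProduct, Fintype.sum_sum_type]
  · show ∑ i : F.V ⊕ Option (Fin k), Sum.elim x 0 i * ∑ j : F.V ⊕ Option (Fin k), (F.extend k).adjMat i j * Sum.elim x 0 j = _
    simp [dotProduct, Matrix.mulVec, Fintype.sum_sum_type,
      adjMat_apply_aux, RootedGraph.extend]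

lemma rowing_forms (F : RootedGraph) (n : ℕ) (x : F.V → ℝ) :
    ∃ y : (F.rowing (List.replicate n 0)).V → ℝ,
      (x ≠ 0 → y ≠ 0) ∧
      dotProduct y y = dotProduct x x ∧
      dotProduct y ((F.rowing (List.replicate n 0)).adjMat.mulVec y) =
        dotProduct x (F.adjMat.mulVec x) := by
  induction n generalizing F x with
  | zero => exact ⟨x, fun h => h, rfl, rfl⟩
  | succ n ih =>
    obtain ⟨y, h1, h2, h3⟩ := ext_forms F 0 x
    obtain ⟨z, g1, g2, g3⟩ := ih (F.extend 0) y
    rw [List.replicate_succ]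
    exact ⟨z, fun hx => g1 (h1 hx), g2.trans h2, g3.trans h3⟩

lemma rowing_append (F : RootedGraph) (a b : List ℕ) :
    F.rowing (a ++ b) = (F.rowing a).rowing b := by
  simp [RootedGraph.rowing, List.foldl_append]


lemma adjMat_ll_aux (F : RootedGraph) (k : ℕ) (u w : F.V) :
    (F.extend k).adjMat (Sum.inl u) (Sum.inl w) = F.adjMat u w := rfl

open scoped Classical in
lemma adjMat_lr_aux (F : RootedGraph) (k : ℕ) (u : F.V) (b : Option (Fin k)) :
    (F.extend k).adjMat (Sum.inl u) (Sum.inr b) = if u = F.root then 1 else 0 := rfl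

open scoped Classical in
lemma adjMat_rl_aux (F : RootedGraph) (k : ℕ) (b : Option (Fin k)) (w : F.V) :
    (F.extend k).adjMat (Sum.inr b) (Sum.inl w) = if w = F.root then 1 else 0 := rfl

lemma adjMat_rr_aux (F : RootedGraph) (k : ℕ) (x y : Option (Fin k)) :
    (F.extend k).adjMat (Sum.inr x) (Sum.inr y) = if x = y then 0 else 1 := by
  by_cases h : x = y
  · subst h
    rw [if_pos rfl]
    exact if_neg (fun h' => h' rfl)
  · rw [if_neg h]
    exact if_pos h

lemma qf_step_aux (F : RootedGraph) (y : (F.extend 0).V → ℝ) (f : F.V → ℝ)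
    (hf : ∀ a, y (Sum.inl a) = f a) (q r c : ℝ) (hq : dotProduct f (F.adjMat.mulVec f) = q)
    (hr : f F.root = r) (hc : y (Sum.inr none) = c) :
    dotProduct y ((F.extend 0).adjMat.mulVec y) = q + 2 * r * c := by
  classical
  subst hq hr hc
  show ∑ i : F.V ⊕ Option (Fin 0), y i * ∑ j : F.V ⊕ Option (Fin 0), (F.extend 0).adjMat i j * y j = _
  simp only [Fintype.sum_sum_type, Fintype.sum_option, Fin.sum_univ_zero, add_zero, hf,
    adjMat_ll_aux, adjMat_lr_aux, adjMat_rl_aux, adjMat_rr_aux]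
  simp [dotProduct, Matrix.mulVec, mul_add, Finset.sum_add_distrib, ite_mul, mul_ite]
  ring

lemma nn_step_aux (F : RootedGraph) (y : (F.extend 0).V → ℝ) (f : F.V → ℝ)
    (hf : ∀ a, y (Sum.inl a) = f a) (n c : ℝ) (hn : dotProduct f f = n)
    (hc : y (Sum.inr none) = c) :
    dotProduct y y = n + c * c := by
  subst hn hc
  show ∑ i : F.V ⊕ Option (Fin 0), y i * y i = _
  simp only [Fintype.sum_sum_type, Fintype.sum_option, Fin.sum_univ_zero, add_zero, hf]
  rfl

lemma base_qf1_aux (f : F1.V → ℝ) (h0 : f (0 : Fin 4) = 33) (h1 : f (1 : Fin 4) = -66) (h2 : f (2 : Fin 4) = 100) (h3 : f (3 : Fin 4) = -50) :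
    dotProduct f (F1.adjMat.mulVec f) = -27556 := by
  show ∑ i : Fin 4, f i * ∑ j : Fin 4, @ite ℝ ((SimpleGraph.pathGraph 4).Adj i j) (Classical.propDecidable _) 1 0 * f j = _
  simp only [Fin.sum_univ_four, h0, h1, h2, h3, SimpleGraph.pathGraph_adj]
  norm_num

lemma base_nn1_aux (f : F1.V → ℝ) (h0 : f (0 : Fin 4) = 33) (h1 : f (1 : Fin 4) = -66) (h2 : f (2 : Fin 4) = 100) (h3 : f (3 : Fin 4) = -50) :
    dotProduct f f = 17945 := by
  show ∑ i : Fin 4, f i * f i = _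
  norm_num [Fin.sum_univ_four, h0, h1, h2, h3]

lemma base_qf2_aux (f : F2.V → ℝ) (h0 : f (0 : Fin 5) = -40) (h1 : f (1 : Fin 5) = -20) (h2 : f (2 : Fin 5) = -20) (h3 : f (3 : Fin 5) = -40) (h4 : f (4 : Fin 5) = 100) :
    dotProduct f (F2.adjMat.mulVec f) = -20000 := by
  show ∑ i : Fin 5, f i * ∑ j : Fin 5, @ite ℝ ((SimpleGraph.fromRel fun i j : Fin 5 => (i.val + 1 = j.val ∧ j.val ≤ 3) ∨ i.val = 4).Adj i j) (Classical.propDecidable _) 1 0 * f j = _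
  simp only [Fin.sum_univ_five, h0, h1, h2, h3, h4, SimpleGraph.fromRel_adj]
  norm_num [Fin.ext_iff]

lemma base_nn2_aux (f : F2.V → ℝ) (h0 : f (0 : Fin 5) = -40) (h1 : f (1 : Fin 5) = -20) (h2 : f (2 : Fin 5) = -20) (h3 : f (3 : Fin 5) = -40) (h4 : f (4 : Fin 5) = 100) :
    dotProduct f f = 14000 := by
  show ∑ i : Fin 5, f i * f i = _
  norm_num [Fin.sum_univ_five, h0, h1, h2, h3, h4]

lemma base_qf3_aux (f : F3.V → ℝ) (h0 : f (0 : Fin 6) = -17) (h1 : f (1 : Fin 6) = 35) (h2 : f (2 : Fin 6) = -54) (h3 : f (3 : Fin 6) = 75) (h4 : f (4 : Fin 6) = -100) (h5 : f (5 : Fin 6) = 49) :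
    dotProduct f (F3.adjMat.mulVec f) = -37870 := by
  show ∑ i : Fin 6, f i * ∑ j : Fin 6, @ite ℝ ((SimpleGraph.pathGraph 6).Adj i j) (Classical.propDecidable _) 1 0 * f j = _
  simp only [Fin.sum_univ_six, h0, h1, h2, h3, h4, h5, SimpleGraph.pathGraph_adj]
  norm_num

lemma base_nn3_aux (f : F3.V → ℝ) (h0 : f (0 : Fin 6) = -17) (h1 : f (1 : Fin 6) = 35) (h2 : f (2 : Fin 6) = -54) (h3 : f (3 : Fin 6) = 75) (h4 : f (4 : Fin 6) = -100) (h5 : f (5 : Fin 6) = 49) :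
    dotProduct f f = 22456 := by
  show ∑ i : Fin 6, f i * f i = _
  norm_num [Fin.sum_univ_six, h0, h1, h2, h3, h4, h5]

noncomputable def testVec1 : (F1.rowing (List.replicate 10 0)).V → ℝ :=
  (Sum.elim (Sum.elim (Sum.elim (Sum.elim (Sum.elim (Sum.elim (Sum.elim (Sum.elim (Sum.elim (Sum.elim ![(33:ℝ),-66,100,-50] (fun _ => -86)) (fun _ => 74)) (fun _ => -63)) (fun _ => 53)) (fun _ => -44)) (fun _ => 36)) (fun _ => -28)) (fun _ => 20)) (fun _ => -13)) (fun _ => 7))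

lemma testVec1_ne : testVec1 ≠ 0 := by
  intro h
  have := congrFun h (Sum.inr none)
  change (7:ℝ) = 0 at this
  norm_num [testVec1] at this

set_option maxRecDepth 100000 in
set_option maxHeartbeats 4000000 in
lemma testVec1_qf :
    dotProduct testVec1
        (((F1.rowing (List.replicate 10 0))).adjMat.mulVec testVec1) ≤
      (-85156/42229) * dotProduct testVec1 testVec1 := by
  have hQ : dotProduct testVec1 ((F1.rowing (List.replicate 10 0)).adjMat.mulVec testVec1) = _ :=
    qf_step_aux (((((((((F1.extend 0).extend 0).extend 0).extend 0).extend 0).extend 0).extend 0).extend 0).extend 0) testVec1 _ (fun _ => rfl) _ (-13 : ℝ) (7 : ℝ) (qf_step_aux _ _ _ (fun _ => rfl) _ (20 : ℝ) (-13 : ℝ) (qf_step_aux _ _ _ (fun _ => rfl) _ (-28 : ℝ) (20 : ℝ) (qf_step_aux _ _ _ (fun _ => rfl) _ (36 : ℝ) (-28 : ℝ) (qf_step_aux _ _ _ (fun _ => rfl) _ (-44 : ℝ) (36 : ℝ) (qf_step_aux _ _ _ (fun _ => rfl) _ (53 : ℝ) (-44 : ℝ) (qf_step_aux _ _ _ (fun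 _ => rfl) _ (-63 : ℝ) (53 : ℝ) (qf_step_aux _ _ _ (fun _ => rfl) _ (74 : ℝ) (-63 : ℝ) (qf_step_aux _ _ _ (fun _ => rfl) _ (-86 : ℝ) (74 : ℝ) (qf_step_aux _ _ _ (fun _ => rfl) _ (100 : ℝ) (-86 : ℝ) (base_qf1_aux _ rfl rfl rfl rfl) rfl rfl) rfl rfl) rfl rfl) rfl rfl) rfl rfl) rfl rfl) rfl rfl) rfl rfl) rfl rfl) rfl rfl
  have hN : dotProduct testVec1 testVec1 = _ :=
    nn_step_aux (((((((((F1.extend 0).extend 0).extend 0).extend 0).extend 0).extend 0).extend 0).extend 0).extend 0) testVec1 _ (fun _ => rfl) _ (7 : ℝ) (nn_step_aux _ _ _ (fun _ => rfl) _ (-13 : ℝ) (nn_step_aux _ _ _ (fun _ => rfl) _ (20 : ℝ) (nn_step_aux _ _ _ (fun _ => rfl) _ (-28 : ℝ) (nn_step_aux _ _ _ (fun _ => rfl) _ (36 : ℝ) (nn_step_aux _ _ _ (fun _ => rfl) _ (-44 : ℝ) (nn_step_aux _ _ _ (fun _ => rfl) _ (53 : ℝ) (nn_step_aux _ _ _ (fun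 _ => rfl) _ (-63 : ℝ) (nn_step_aux _ _ _ (fun _ => rfl) _ (74 : ℝ) (nn_step_aux _ _ _ (fun _ => rfl) _ (-86 : ℝ) (base_nn1_aux _ rfl rfl rfl rfl) rfl) rfl) rfl) rfl) rfl) rfl) rfl) rfl) rfl) rfl
  rw [hQ, hN]
  norm_num

noncomputable def testVec2 : (F2.rowing (List.replicate 8 0)).V → ℝ :=
  (Sum.elim (Sum.elim (Sum.elim (Sum.elim (Sum.elim (Sum.elim (Sum.elim (Sum.elim ![(-40:ℝ),-20,-20,-40,100] (fun _ => -83)) (fun _ => 69)) (fun _ => -56)) (fun _ => 45)) (fun _ => -35)) (fun _ => 25)) (fun _ => -16)) (fun _ => 8))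

lemma testVec2_ne : testVec2 ≠ 0 := by
  intro h
  have := congrFun h (Sum.inr none)
  change (8:ℝ) = 0 at this
  norm_num [testVec2] at this

set_option maxRecDepth 100000 in
set_option maxHeartbeats 4000000 in
lemma testVec2_qf :
    dotProduct testVec2
        (((F2.rowing (List.replicate 8 0))).adjMat.mulVec testVec2) ≤
      (-66778/32981) * dotProduct testVec2 testVec2 := by
  have hQ : dotProduct testVec2 ((F2.rowing (List.replicate 8 0)).adjMat.mulVec testVec2) = _ :=
    qf_step_aux (((((((F2.extend 0).extend 0).extend 0).extend 0).extend 0).extend 0).extend 0) testVec2 _ (fun _ => rfl) _ (-16 : ℝ) (8 : ℝ) (qf_step_aux _ _ _ (fun _ => rfl) _ (25 : ℝ) (-16 : ℝ) (qf_step_aux _ _ _ (fun _ => rfl) _ (-35 : ℝ) (25 : ℝ) (qf_step_aux _ _ _ (fun _ => rfl) _ (45 : ℝ) (-35 : ℝ) (qf_step_aux _ _ _ (fun _ => rfl) _ (-56 : ℝ) (45 : ℝ) (qf_step_aux _ _ _ (fun _ => rfl) _ (69 : ℝ) (-56 : ℝ) (qf_step_aux _ _ _ (fun _ => rfl) _ (-83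 : ℝ) (69 : ℝ) (qf_step_aux _ _ _ (fun _ => rfl) _ (100 : ℝ) (-83 : ℝ) (base_qf2_aux _ rfl rfl rfl rfl rfl) rfl rfl) rfl rfl) rfl rfl) rfl rfl) rfl rfl) rfl rfl) rfl rfl) rfl rfl
  have hN : dotProduct testVec2 testVec2 = _ :=
    nn_step_aux (((((((F2.extend 0).extend 0).extend 0).extend 0).extend 0).extend 0).extend 0) testVec2 _ (fun _ => rfl) _ (8 : ℝ) (nn_step_aux _ _ _ (fun _ => rfl) _ (-16 : ℝ) (nn_step_aux _ _ _ (fun _ => rfl) _ (25 : ℝ) (nn_step_aux _ _ _ (fun _ => rfl) _ (-35 : ℝ) (nn_step_aux _ _ _ (fun _ => rfl) _ (45 : ℝ) (nn_step_aux _ _ _ (fun _ => rfl) _ (-56 : ℝ) (nn_step_aux _ _ _ (fun _ => rfl) _ (69 : ℝ) (nn_step_aux _ _ _ (fun _ => rfl) _ (-83 : ℝ) (base_nn2_aux _ rfl rfl rfl rfl rfl) rfl) rfl) rfl) rfl) rfl) rfl) rfl) rfl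
  rw [hQ, hN]
  norm_num

noncomputable def testVec3 : (F3.rowing (List.replicate 8 0)).V → ℝ :=
  (Sum.elim (Sum.elim (Sum.elim (Sum.elim (Sum.elim (Sum.elim (Sum.elim (Sum.elim ![(-17:ℝ),35,-54,75,-100,49] (fun _ => 80)) (fun _ => -64)) (fun _ => 50)) (fun _ => -39)) (fun _ => 29)) (fun _ => -21)) (fun _ => 13)) (fun _ => -7))

lemma testVec3_ne : testVec3 ≠ 0 := by
  intro h
  have := congrFun h (Sum.inr none)
  change (-7:ℝ) = 0 at this
  norm_num [testVec3] at this

set_option maxRecDepth 100000 in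
set_option maxHeartbeats 4000000 in
lemma testVec3_qf :
    dotProduct testVec3
        (((F3.rowing (List.replicate 8 0))).adjMat.mulVec testVec3) ≤
      (-78618/38473) * dotProduct testVec3 testVec3 := by
  have hQ : dotProduct testVec3 ((F3.rowing (List.replicate 8 0)).adjMat.mulVec testVec3) = _ :=
    qf_step_aux (((((((F3.extend 0).extend 0).extend 0).extend 0).extend 0).extend 0).extend 0) testVec3 _ (fun _ => rfl) _ (13 : ℝ) (-7 : ℝ) (qf_step_aux _ _ _ (fun _ => rfl) _ (-21 : ℝ) (13 : ℝ) (qf_step_aux _ _ _ (fun _ => rfl) _ (29 : ℝ) (-21 : ℝ) (qf_step_aux _ _ _ (fun _ => rfl) _ (-39 : ℝ) (29 : ℝ) (qf_step_aux _ _ _ (fun _ => rfl) _ (50 : ℝ) (-39 : ℝ) (qf_step_aux _ _ _ (fun _ => rfl) _ (-64 : ℝ) (50 : ℝ) (qf_step_aux _ _ _ (fun _ => rfl) _ (80 : ℝ) (-64 : ℝ) (qf_step_aux _ _ _ (fun _ => rfl) _ (-100 : ℝ) (80 : ℝ) (base_qf3_aux _ rfl rfl rfl rfl rfl rfl) rfl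 rfl) rfl rfl) rfl rfl) rfl rfl) rfl rfl) rfl rfl) rfl rfl) rfl rfl
  have hN : dotProduct testVec3 testVec3 = _ :=
    nn_step_aux (((((((F3.extend 0).extend 0).extend 0).extend 0).extend 0).extend 0).extend 0) testVec3 _ (fun _ => rfl) _ (-7 : ℝ) (nn_step_aux _ _ _ (fun _ => rfl) _ (13 : ℝ) (nn_step_aux _ _ _ (fun _ => rfl) _ (-21 : ℝ) (nn_step_aux _ _ _ (fun _ => rfl) _ (29 : ℝ) (nn_step_aux _ _ _ (fun _ => rfl) _ (-39 : ℝ) (nn_step_aux _ _ _ (fun _ => rfl) _ (50 : ℝ) (nn_step_aux _ _ _ (fun _ => rfl) _ (-64 : ℝ) (nn_step_aux _ _ _ (fun _ => rfl) _ (80 : ℝ) (base_nn3_aux _ rfl rfl rfl rfl rfl rfl) rfl) rfl) rfl) rfl) rfl) rfl) rfl) rfl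
  rw [hQ, hN]
  norm_num

lemma limit_le (F : RootedGraph) (n₀ : ℕ) (x : (F.rowing (List.replicate n₀ 0)).V → ℝ)
    (hx : x ≠ 0) (c : ℝ)
    (h : dotProduct x ((F.rowing (List.replicate n₀ 0)).adjMat.mulVec x) ≤
      c * dotProduct x x)
    (L : ℝ)
    (hL : Filter.Tendsto (fun n : ℕ => (F.rowing (List.replicate n 0)).lam1)
      Filter.atTop (nhds L)) : L ≤ c := by
  apply le_of_tendsto hL
  filter_upwards [Filter.eventually_ge_atTop n₀] with n hn
  obtain ⟨m, rfl⟩ := Nat.exists_eq_add_of_le hn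
  have hrepl : List.replicate (n₀ + m) (0:ℕ) = List.replicate n₀ 0 ++ List.replicate m 0 :=
    List.replicate_add n₀ m 0
  rw [hrepl, rowing_append]
  obtain ⟨y, h1, h2, h3⟩ := rowing_forms (F.rowing (List.replicate n₀ 0)) m x
  exact lam1_le_ray _ y (h1 hx) c (by rw [h3, h2]; exact h)

/-- For each `i ∈ {1,2,3}`, the limit `λ₁(F_i, 0^∞) = lim_{n→∞} λ₁(F_i, 0ⁿ)` is
strictly less than `-2`. -/
theorem lam1_rowing_limit_lt_neg_two (L1 L2 L3 : ℝ)
    (hL1 : Filter.Tendsto (fun n : ℕ => (F1.rowing (List.replicate n 0)).lam1)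
      Filter.atTop (nhds L1))
    (hL2 : Filter.Tendsto (fun n : ℕ => (F2.rowing (List.replicate n 0)).lam1)
      Filter.atTop (nhds L2))
    (hL3 : Filter.Tendsto (fun n : ℕ => (F3.rowing (List.replicate n 0)).lam1)
      Filter.atTop (nhds L3)) :
    L1 < -2 ∧ L2 < -2 ∧ L3 < -2 := by
  refine ⟨?_, ?_, ?_⟩
  · have := limit_le F1 10 testVec1 testVec1_ne _ testVec1_qf L1 hL1
    have h2 : (-85156/42229 : ℝ) < -2 := by norm_num
    linarith
  · have := limit_le F2 8 testVec2 testVec2_ne _ testVec2_qf L2 hL2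
    have h2 : (-66778/32981 : ℝ) < -2 := by norm_num
    linarith
  · have := limit_le F3 8 testVec3 testVec3_ne _ testVec3_qf L3 hL3
    have h2 : (-78618/38473 : ℝ) < -2 := by norm_num
    linarith
end

section
/- For every rooted graph G with root v and every real x > 2, letting y = x/2 - √(x²/4 - 1), the following are equivalent: λ₁(G, 0^∞) > -x, and the matrix A_G + xI - y·E_{v,v} is positive definite, where A_G is the adjacency matrix of G and E_{v,v} is the matrix whose only nonzero entry is a 1 in position (v,v). -/
open Matrix

section Spectral

variable {n : Type} [Fintype n] [DecidableEq n] {M : Matrix n n ℝ}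

lemma dotp_self_nonneg (u : n → ℝ) : 0 ≤ u ⬝ᵥ u :=
  Finset.sum_nonneg fun i _ => mul_self_nonneg (u i)

lemma dotp_self_pos {u : n → ℝ} (hu : u ≠ 0) : 0 < u ⬝ᵥ u := by
  obtain ⟨i, hi⟩ := Function.ne_iff.mp hu
  exact Finset.sum_pos' (fun j _ => mul_self_nonneg _) ⟨i, Finset.mem_univ i,
    mul_self_pos.2 hi⟩

lemma form_eq (hM : M.IsHermitian) (u : n → ℝ) :
    u ⬝ᵥ (M *ᵥ u) = ∑ i, hM.eigenvalues i *
      ((star (hM.eigenvectorUnitary : Matrix n n ℝ) *ᵥ u) i)^2 := by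
  set U : Matrix n n ℝ := (hM.eigenvectorUnitary : Matrix n n ℝ) with hU
  conv_lhs => rw [hM.spectral_theorem, Unitary.conjStarAlgAut_apply]
  have hof : (RCLike.ofReal ∘ hM.eigenvalues : n → ℝ) = hM.eigenvalues := rfl
  rw [hof, ← mulVec_mulVec, ← mulVec_mulVec, dotProduct_mulVec u U]
  have hvm : u ᵥ* U = star U *ᵥ u := by
    ext j
    simp [vecMul, mulVec, dotProduct, Matrix.star_apply, mul_comm]
  rw [hvm]
  simp only [dotProduct, mulVec_diagonal, sq]
  exact Finset.sum_congr rfl fun i _ => by ring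

lemma wnorm_eq (hM : M.IsHermitian) (u : n → ℝ) :
    (star (hM.eigenvectorUnitary : Matrix n n ℝ) *ᵥ u) ⬝ᵥ
      (star (hM.eigenvectorUnitary : Matrix n n ℝ) *ᵥ u) = u ⬝ᵥ u := by
  set U : Matrix n n ℝ := (hM.eigenvectorUnitary : Matrix n n ℝ) with hU
  have h1 : U * star U = 1 := (Matrix.mem_unitaryGroup_iff).mp hM.eigenvectorUnitary.2
  have hvm : star U *ᵥ u = u ᵥ* U := by
    ext j
    simp [vecMul, mulVec, dotProduct, Matrix.star_apply, mul_comm]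
  rw [hvm, ← dotProduct_mulVec, ← hvm, mulVec_mulVec, h1, one_mulVec]

lemma w_ne_zero (hM : M.IsHermitian) {u : n → ℝ} (hu : u ≠ 0) :
    star (hM.eigenvectorUnitary : Matrix n n ℝ) *ᵥ u ≠ 0 := by
  intro h
  apply hu
  have := dotp_self_pos (n := n) (u := u)
  have h2 := wnorm_eq hM u
  rw [h, zero_dotProduct] at h2
  by_contra hu'
  exact absurd (h2 ▸ dotp_self_pos hu') (by simp)

lemma form_ge (hM : M.IsHermitian) {c : ℝ} (hc : ∀ i, c ≤ hM.eigenvalues i) (u : n → ℝ) :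
    c * (u ⬝ᵥ u) ≤ u ⬝ᵥ (M *ᵥ u) := by
  rw [form_eq hM u, ← wnorm_eq hM u]
  set w := star (hM.eigenvectorUnitary : Matrix n n ℝ) *ᵥ u
  rw [dotProduct, Finset.mul_sum]
  refine Finset.sum_le_sum fun i _ => ?_
  have := mul_le_mul_of_nonneg_right (hc i) (sq_nonneg (w i))
  calc c * (w i * w i) = c * (w i)^2 := by ring
    _ ≤ hM.eigenvalues i * (w i)^2 := this

lemma posDef_of_eig_pos (hM : M.IsHermitian) (h : ∀ i, 0 < hM.eigenvalues i) :
    M.PosDef := by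
  refine Matrix.PosDef.of_dotProduct_mulVec_pos hM fun u hu => ?_
  rw [star_trivial]
  cases isEmpty_or_nonempty n
  · exact absurd (funext fun i => (IsEmpty.false i).elim) hu
  · set c := Finset.univ.inf' Finset.univ_nonempty hM.eigenvalues with hc
    have hcpos : 0 < c := by
      obtain ⟨i, _, hi⟩ := Finset.exists_mem_eq_inf' Finset.univ_nonempty hM.eigenvalues
      rw [hc, hi]; exact h i
    calc (0:ℝ) < c * (u ⬝ᵥ u) := mul_pos hcpos (dotp_self_pos hu)
      _ ≤ u ⬝ᵥ (M *ᵥ u) := form_ge hM (fun i => Finset.inf'_le _ (Finset.mem_univ i)) u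

lemma posDef_bound (h : M.PosDef) :
    ∃ c > 0, ∀ u : n → ℝ, c * (u ⬝ᵥ u) ≤ u ⬝ᵥ (M *ᵥ u) := by
  cases isEmpty_or_nonempty n
  · exact ⟨1, one_pos, fun u => by
      have : u = 0 := funext fun i => (IsEmpty.false i).elim
      simp [this]⟩
  · refine ⟨Finset.univ.inf' Finset.univ_nonempty h.1.eigenvalues, ?_, fun u =>
      form_ge h.1 (fun i => Finset.inf'_le _ (Finset.mem_univ i)) u⟩
    obtain ⟨i, _, hi⟩ := Finset.exists_mem_eq_inf' Finset.univ_nonempty h.1.eigenvalues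
    rw [hi]; exact h.eigenvalues_pos i

lemma eigen_mem (hM : M.IsHermitian) {t : ℝ} {v : n → ℝ} (hv : v ≠ 0)
    (heq : M *ᵥ v = t • v) : ∃ i, hM.eigenvalues i = t := by
  set U : Matrix n n ℝ := (hM.eigenvectorUnitary : Matrix n n ℝ) with hU
  have h1 : U * star U = 1 := (Matrix.mem_unitaryGroup_iff).mp hM.eigenvectorUnitary.2
  have h1' : star U * U = 1 := (Matrix.mem_unitaryGroup_iff').mp hM.eigenvectorUnitary.2
  have hker : (M - t • 1) *ᵥ v = 0 := by
    rw [sub_mulVec, heq, smul_mulVec, one_mulVec, sub_self]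
  have hdet : (M - t • 1).det = 0 := by
    rw [← Matrix.exists_mulVec_eq_zero_iff]
    exact ⟨v, hv, hker⟩
  have hdecomp : M - t • 1 = U * (Matrix.diagonal (fun i => hM.eigenvalues i - t)) * star U := by
    have hsp := hM.spectral_theorem
    have hone : t • (1 : Matrix n n ℝ) = U * (t • 1) * star U := by
      rw [Matrix.mul_smul, Matrix.smul_mul, mul_one, h1]
    calc M - t • 1 = U * Matrix.diagonal (RCLike.ofReal ∘ hM.eigenvalues) * star U
          - U * (t • 1) * star U := by
          rw [← hone]; conv_lhs => rw [hsp]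
          rw [Unitary.conjStarAlgAut_apply]
      _ = U * (Matrix.diagonal (RCLike.ofReal ∘ hM.eigenvalues) - t • 1) * star U := by
          rw [Matrix.mul_sub, Matrix.sub_mul]
      _ = U * (Matrix.diagonal (fun i => hM.eigenvalues i - t)) * star U := by
          congr 1
          congr 1
          ext i j
          by_cases hij : i = j <;>
            simp [Matrix.diagonal_apply, hij, Matrix.one_apply, Function.comp]
  rw [hdecomp] at hdet
  have : (Matrix.diagonal (fun i => hM.eigenvalues i - t)).det = 0 := by
    have hdu : U.det * (star U).det = 1 := by rw [← Matrix.det_mul, h1, Matrix.det_one]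
    have := hdet
    rw [Matrix.det_mul, Matrix.det_mul] at this
    by_contra hne
    have hUdet : U.det ≠ 0 := fun h0 => by simp [h0] at hdu
    have hsUdet : (star U).det ≠ 0 := fun h0 => by simp [h0] at hdu
    exact (mul_ne_zero (mul_ne_zero hUdet hne) hsUdet) this
  rw [Matrix.det_diagonal] at this
  obtain ⟨i, _, hi⟩ := Finset.prod_eq_zero_iff.mp this
  exact ⟨i, by linarith [sub_eq_zero.mp hi]⟩

end Spectral

open scoped Classical in
noncomputable def RootedGraph.Mmat (F : RootedGraph) (x t : ℝ) : Matrix F.V F.V ℝ :=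
  F.adjMat + x • (1 : Matrix F.V F.V ℝ) - t • Matrix.single F.root F.root 1

lemma RootedGraph.adjMat_isHermitian_s14 (F : RootedGraph) : F.adjMat.IsHermitian := by
  ext i j
  simp only [RootedGraph.adjMat, conjTranspose_apply, Matrix.of_apply, star_trivial]
  by_cases h : F.G.Adj i j
  · rw [if_pos h, if_pos (F.G.adj_symm h)]
  · rw [if_neg h, if_neg (fun h' => h (F.G.adj_symm h'))]

open scoped Classical in
lemma RootedGraph.Mmat_isHermitian (F : RootedGraph) (x t : ℝ) :
    (F.Mmat x t).IsHermitian := by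
  have h1 : (Matrix.single F.root F.root (1:ℝ)).IsHermitian := by
    ext i j
    simp [conjTranspose_apply, Matrix.single, and_comm]
  have h2 : ((1 : Matrix F.V F.V ℝ)).IsHermitian := Matrix.isHermitian_one
  have h3 := F.adjMat_isHermitian_s14
  unfold RootedGraph.Mmat Matrix.IsHermitian at *
  rw [conjTranspose_sub, conjTranspose_add, conjTranspose_smul, conjTranspose_smul,
    h1, h2, h3, star_trivial, star_trivial]

open scoped Classical in
lemma RootedGraph.Mmat_form (F : RootedGraph) (x t : ℝ) (u : F.V → ℝ) :
    u ⬝ᵥ (F.Mmat x t *ᵥ u) =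
      u ⬝ᵥ (F.adjMat *ᵥ u) + x * (u ⬝ᵥ u) - t * (u F.root)^2 := by
  have hstd : u ⬝ᵥ ((Matrix.single F.root F.root (1:ℝ)) *ᵥ u) = (u F.root)^2 := by
    simp [Matrix.mulVec, dotProduct, Matrix.single, ite_and,
      Finset.mul_sum, mul_ite, sq]
  rw [RootedGraph.Mmat, sub_mulVec, add_mulVec, smul_mulVec, smul_mulVec,
    one_mulVec, dotProduct_sub, dotProduct_add, dotProduct_smul, dotProduct_smul, hstd]
  simp [smul_eq_mul]

open scoped Classical in
lemma sum_root_ite (F : RootedGraph) (f : F.V → ℝ) :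
    ∑ v : F.V, (if v = F.root then f v else 0) = f F.root := by
  rw [Finset.sum_ite_eq' Finset.univ F.root f]
  simp

lemma extend_zero_adj_form (F : RootedGraph) (u : (F.extend 0).V → ℝ) :
    u ⬝ᵥ ((F.extend 0).adjMat *ᵥ u) =
      (u ∘ Sum.inl) ⬝ᵥ (F.adjMat *ᵥ (u ∘ Sum.inl)) +
        2 * u (Sum.inr none) * (u ∘ Sum.inl) F.root := by
  classical
  have hsum : ∀ f : (F.extend 0).V → ℝ, ∑ i, f i = ∑ a : F.V, f (Sum.inl a) + f (Sum.inr none) :=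
    fun f => by erw [Fintype.sum_sum_type]; simp [Fintype.sum_option]; rfl
  have hA1 : ∀ a b, (F.extend 0).adjMat (Sum.inl a) (Sum.inl b) = F.adjMat a b := fun a b => rfl
  have hA2 : ∀ a, (F.extend 0).adjMat (Sum.inl a) (Sum.inr none) = if a = F.root then 1 else 0 :=
    fun a => rfl
  have hA3 : ∀ a, (F.extend 0).adjMat (Sum.inr none) (Sum.inl a) = if a = F.root then 1 else 0 :=
    fun a => rfl
  have hA4 : (F.extend 0).adjMat (Sum.inr none) (Sum.inr none) = 0 := by
    unfold RootedGraph.adjMat; exact if_neg (fun h => h rfl)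
  simp only [dotProduct, Matrix.mulVec, hsum, hA1, hA2, hA3, hA4]
  simp only [mul_add, Finset.sum_add_distrib, Finset.mul_sum, ite_mul, mul_ite, one_mul,
    zero_mul, mul_zero, mul_one, Finset.sum_ite_eq', Finset.mem_univ, if_true, add_zero,
    Function.comp]
  ring

lemma extend_zero_dot (F : RootedGraph) (u : (F.extend 0).V → ℝ) :
    u ⬝ᵥ u = (u ∘ Sum.inl) ⬝ᵥ (u ∘ Sum.inl) + (u (Sum.inr none))^2 := by
  simp [dotProduct, Fintype.sum_sum_type, Fintype.sum_option, Function.comp, sq,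
    RootedGraph.extend]
  erw [Fintype.sum_sum_type]; simp [Fintype.sum_option]; rfl

open scoped Classical in
lemma extend_step (F : RootedGraph) (x t : ℝ) (ht : 0 < x - t) :
    ((F.extend 0).Mmat x t).PosDef ↔ (F.Mmat x (1/(x-t))).PosDef := by
  have key : ∀ u : (F.extend 0).V → ℝ,
      u ⬝ᵥ ((F.extend 0).Mmat x t *ᵥ u) =
        (u ∘ Sum.inl) ⬝ᵥ (F.Mmat x (1/(x-t)) *ᵥ (u ∘ Sum.inl)) +
          (x - t) * (u (Sum.inr none) + (u ∘ Sum.inl) F.root / (x - t))^2 := by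
    intro u
    rw [RootedGraph.Mmat_form, RootedGraph.Mmat_form, extend_zero_adj_form, extend_zero_dot]
    have hroot : u ((F.extend 0).root) = u (Sum.inr none) := rfl
    rw [hroot]
    field_simp
    ring
  have hzero : ∀ u : (F.extend 0).V → ℝ, u ∘ Sum.inl = 0 → u (Sum.inr none) = 0 → u = 0 := by
    intro u h1 h2
    funext i
    match i with
    | Sum.inl a => exact congrFun h1 a
    | Sum.inr none => exact h2
    | Sum.inr (some f) => exact f.elim0
  constructor
  · intro h
    refine Matrix.PosDef.of_dotProduct_mulVec_pos (F.Mmat_isHermitian x _) fun w hw => ?_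
    rw [star_trivial]
    set u : (F.extend 0).V → ℝ := Sum.elim w (fun _ => -(w F.root)/(x-t)) with hudef
    have hui : u ∘ Sum.inl = w := rfl
    have hun : u (Sum.inr none) = -(w F.root)/(x-t) := rfl
    have hune : u ≠ 0 := fun h0 => hw (by rw [← hui, h0]; rfl)
    have hpos := h.dotProduct_mulVec_pos hune
    rw [star_trivial, key u, hui, hun] at hpos
    have hc : -(w F.root)/(x-t) + w F.root/(x-t) = 0 := by ring
    rw [hc] at hpos
    simpa using hpos
  · intro h
    refine Matrix.PosDef.of_dotProduct_mulVec_pos ((F.extend 0).Mmat_isHermitian x _) fun u hu => ?_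
    rw [star_trivial, key u]
    by_cases h1 : u ∘ Sum.inl = 0
    · have hs : u (Sum.inr none) ≠ 0 := fun h2 => hu (hzero u h1 h2)
      rw [h1]
      simp only [zero_dotProduct, Pi.zero_apply, zero_div, add_zero, zero_add]
      exact mul_pos ht (by rw [sq]; exact mul_self_pos.2 hs)
    · have hpos := h.dotProduct_mulVec_pos h1
      rw [star_trivial] at hpos
      have h2 : 0 ≤ (x - t) * (u (Sum.inr none) + (u ∘ Sum.inl) F.root / (x - t))^2 :=
        mul_nonneg ht.le (sq_nonneg _)
      linarith

noncomputable def ybar (x : ℝ) : ℝ := x / 2 - Real.sqrt (x ^ 2 / 4 - 1)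

lemma ybar_sqrt_sq {x : ℝ} (hx : 2 < x) :
    Real.sqrt (x ^ 2 / 4 - 1) ^ 2 = x ^ 2 / 4 - 1 :=
  Real.sq_sqrt (by nlinarith)

lemma ybar_key {x : ℝ} (hx : 2 < x) : ybar x * (x - ybar x) = 1 := by
  have h := ybar_sqrt_sq hx
  unfold ybar
  nlinarith [h]

lemma sub_ybar_gt_one {x : ℝ} (hx : 2 < x) : 1 < x - ybar x := by
  have h := Real.sqrt_nonneg (x ^ 2 / 4 - 1)
  unfold ybar
  nlinarith

lemma ybar_pos {x : ℝ} (hx : 2 < x) : 0 < ybar x := by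
  have hk := ybar_key hx
  have h1 := sub_ybar_gt_one hx
  nlinarith

lemma ybar_lt_one {x : ℝ} (hx : 2 < x) : ybar x < 1 := by
  have hk := ybar_key hx
  have h1 := sub_ybar_gt_one hx
  nlinarith

lemma ybar_fix {x : ℝ} (hx : 2 < x) : ybar x = 1 / (x - ybar x) := by
  have hk := ybar_key hx
  have h1 := sub_ybar_gt_one hx
  field_simp
  linarith [hk]

lemma ybar_anti {x x' : ℝ} (hx' : 2 < x') (hxx : x' ≤ x) : ybar x ≤ ybar x' := by
  have hs : Real.sqrt (x' ^ 2 / 4 - 1) ≤ Real.sqrt (x ^ 2 / 4 - 1) := by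
    apply Real.sqrt_le_sqrt
    nlinarith
  have hx2 : x' ^ 2 ≤ x ^ 2 := by nlinarith
  have key : ∀ z : ℝ, 2 < z → ybar z = 1 / (z / 2 + Real.sqrt (z ^ 2 / 4 - 1)) := by
    intro z hz
    have h := ybar_sqrt_sq hz
    have hpos : 0 < z / 2 + Real.sqrt (z ^ 2 / 4 - 1) := by
      have := Real.sqrt_nonneg (z ^ 2 / 4 - 1); linarith
    rw [eq_div_iff hpos.ne']
    unfold ybar
    nlinarith [h]
  rw [key x (lt_of_lt_of_le hx' hxx), key x' hx']
  have hpos' : 0 < x' / 2 + Real.sqrt (x' ^ 2 / 4 - 1) := by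
    have := Real.sqrt_nonneg (x' ^ 2 / 4 - 1); linarith
  apply one_div_le_one_div_of_le hpos'
  linarith

lemma ybar_continuous : Continuous ybar := by
  unfold ybar
  fun_prop

noncomputable def yseq (x : ℝ) : ℕ → ℝ
  | 0 => 0
  | n + 1 => 1 / (x - yseq x n)

lemma yseq_bounds {x : ℝ} (hx : 2 < x) : ∀ n, 0 ≤ yseq x n ∧ yseq x n ≤ ybar x := by
  intro n
  induction n with
  | zero => exact ⟨le_refl 0, (ybar_pos hx).le⟩
  | succ n ih =>
    have h1 := sub_ybar_gt_one hx
    have hsub : 0 < x - yseq x n := by linarith [ih.2]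
    constructor
    · rw [show yseq x (n+1) = 1 / (x - yseq x n) from rfl]
      positivity
    · rw [show yseq x (n+1) = 1 / (x - yseq x n) from rfl, ybar_fix hx]
      apply one_div_le_one_div_of_le (by linarith)
      linarith [ih.2]

lemma yseq_sub_pos {x : ℝ} (hx : 2 < x) (n : ℕ) : 0 < x - yseq x n := by
  have := (yseq_bounds hx n).2
  have := sub_ybar_gt_one hx
  linarith

lemma yseq_gap {x : ℝ} (hx : 2 < x) : ∀ n, ybar x - yseq x n ≤ ybar x ^ (n + 1) := by
  intro n
  induction n with
  | zero => simp [yseq, ybar]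
  | succ n ih =>
    set a := ybar x with ha
    set B := x - yseq x n with hB
    have ha0 : 0 < a := ybar_pos hx
    have hk : a * (x - a) = 1 := ybar_key hx
    have hyb := (yseq_bounds hx n).2
    have hB1 : 1 ≤ B := by have := sub_ybar_gt_one hx; simp only [hB]; linarith
    have hnum : a * B - 1 = a * (a - yseq x n) := by
      simp only [hB]; linear_combination hk
    have hnn : 0 ≤ a * B - 1 := by
      rw [hnum]; exact mul_nonneg ha0.le (by linarith)
    have hstep : a - 1 / B ≤ a * B - 1 := by
      have hid : a * B - 1 - (a - 1 / B) = (B - 1) * (a * B - 1) / B := by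
        field_simp
      have : 0 ≤ (B - 1) * (a * B - 1) / B :=
        div_nonneg (mul_nonneg (by linarith) hnn) (by linarith)
      linarith
    have hfin : a * (a - yseq x n) ≤ a ^ (n + 2) := by
      calc a * (a - yseq x n) ≤ a * a ^ (n + 1) :=
            mul_le_mul_of_nonneg_left ih ha0.le
        _ = a ^ (n + 2) := by ring
    calc a - yseq x (n + 1) = a - 1 / B := rfl
      _ ≤ a * B - 1 := hstep
      _ = a * (a - yseq x n) := hnum
      _ ≤ a ^ (n + 2) := hfin

lemma yseq_tendsto {x : ℝ} (hx : 2 < x) :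
    Filter.Tendsto (yseq x) Filter.atTop (nhds (ybar x)) := by
  have h0 : Filter.Tendsto (fun n : ℕ => ybar x - yseq x n) Filter.atTop (nhds 0) := by
    apply squeeze_zero (fun n => by linarith [(yseq_bounds hx n).2])
      (fun n => yseq_gap hx n)
    have hlt : |ybar x| < 1 := by
      rw [abs_of_pos (ybar_pos hx)]; exact ybar_lt_one hx
    have := tendsto_pow_atTop_nhds_zero_of_abs_lt_one hlt
    exact this.comp (Filter.tendsto_add_atTop_nat 1)
  have := Filter.Tendsto.sub (tendsto_const_nhds (x := ybar x) (f := Filter.atTop (α := ℕ))) h0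
  simpa using this

open scoped Classical in
lemma Mmat_mono (F : RootedGraph) (x : ℝ) {t' t : ℝ} (h : t' ≤ t)
    (hpd : (F.Mmat x t).PosDef) : (F.Mmat x t').PosDef := by
  refine Matrix.PosDef.of_dotProduct_mulVec_pos (F.Mmat_isHermitian x t') fun u hu => ?_
  have h1 := hpd.dotProduct_mulVec_pos hu
  rw [star_trivial, RootedGraph.Mmat_form] at h1 ⊢
  nlinarith [sq_nonneg (u F.root), mul_le_mul_of_nonneg_right h (sq_nonneg (u F.root))]

lemma rowing_replicate_succ (G : RootedGraph) (n : ℕ) :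
    G.rowing (List.replicate (n + 1) 0) = (G.extend 0).rowing (List.replicate n 0) := by
  rw [List.replicate_succ]
  rfl

open scoped Classical in
lemma induction_pd {x : ℝ} (hx : 2 < x) :
    ∀ (n : ℕ) (G : RootedGraph),
      ((G.rowing (List.replicate n 0)).Mmat x 0).PosDef ↔ (G.Mmat x (yseq x n)).PosDef := by
  intro n
  induction n with
  | zero => intro G; rfl
  | succ n ih =>
    intro G
    rw [rowing_replicate_succ]
    rw [ih (G.extend 0)]
    have := extend_step G x (yseq x n) (yseq_sub_pos hx n)
    rw [show yseq x (n+1) = 1 / (x - yseq x n) from rfl]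
    exact this

lemma rowing_nonempty : ∀ (l : List ℕ) (G : RootedGraph),
    Nonempty G.V → Nonempty (G.rowing l).V := by
  intro l
  induction l with
  | nil => exact fun G h => h
  | cons a l ih =>
    intro G _
    exact ih (G.extend a) ⟨Sum.inr none⟩

open scoped Classical in
lemma Mmat_zero (F : RootedGraph) (c : ℝ) :
    F.Mmat c 0 = F.adjMat + c • (1 : Matrix F.V F.V ℝ) := by
  simp [RootedGraph.Mmat]

open scoped Classical in
lemma lam1_gt_iff (F : RootedGraph) (hne : Nonempty F.V) (c : ℝ) :
    -c < F.lam1 ↔ (F.Mmat c 0).PosDef := by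
  have hA := F.adjMat_isHermitian_s14
  have hMc := F.Mmat_isHermitian c 0
  set S := {t : ℝ | ∃ v : F.V → ℝ, v ≠ 0 ∧ F.adjMat.mulVec v = t • v} with hS
  have hlam : F.lam1 = sInf S := rfl
  have hsub : S ⊆ Set.range hA.eigenvalues := by
    rintro t ⟨v, hv, heq⟩
    obtain ⟨i, hi⟩ := eigen_mem hA hv heq
    exact ⟨i, hi⟩
  have hfin : S.Finite := (Set.finite_range hA.eigenvalues).subset hsub
  have hmem : ∀ i : F.V, hA.eigenvalues i ∈ S := by
    intro i
    refine ⟨⇑(hA.eigenvectorBasis i), ?_, hA.mulVec_eigenvectorBasis i⟩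
    intro h0
    exact hA.eigenvectorBasis.orthonormal.ne_zero i (by ext j; exact congrFun h0 j)
  have hSne : S.Nonempty := ⟨_, hmem (Classical.arbitrary F.V)⟩
  have hmc_vec : ∀ (v : F.V → ℝ) (t : ℝ), F.adjMat *ᵥ v = t • v →
      (F.Mmat c 0) *ᵥ v = (t + c) • v := by
    intro v t heq
    rw [Mmat_zero, Matrix.add_mulVec, heq, Matrix.smul_mulVec, Matrix.one_mulVec,
      add_smul]
  constructor
  · intro h
    apply posDef_of_eig_pos hMc
    intro i
    set μ := hMc.eigenvalues i
    have hv := hMc.mulVec_eigenvectorBasis i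
    set v : F.V → ℝ := ⇑(hMc.eigenvectorBasis i) with hvdef
    have hvne : v ≠ 0 := by
      intro h0
      exact hMc.eigenvectorBasis.orthonormal.ne_zero i (by ext j; exact congrFun h0 j)
    have hAv : F.adjMat *ᵥ v = (μ - c) • v := by
      have h1 : F.adjMat *ᵥ v = (F.Mmat c 0) *ᵥ v - c • v := by
        rw [Mmat_zero, Matrix.add_mulVec, Matrix.smul_mulVec, Matrix.one_mulVec]
        abel
      rw [h1, hv, sub_smul]
    have hmemS : μ - c ∈ S := ⟨v, hvne, hAv⟩
    have := csInf_le hfin.bddBelow hmemS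
    rw [hlam] at h
    linarith
  · intro h
    rw [hlam]
    have hin := hSne.csInf_mem hfin
    obtain ⟨v, hv, heq⟩ := hin
    have hMv := hmc_vec v _ heq
    have hpos := h.dotProduct_mulVec_pos hv
    rw [star_trivial, hMv, dotProduct_smul, smul_eq_mul] at hpos
    have hdp := dotp_self_pos hv
    nlinarith


open scoped Classical in
/-- For every rooted graph `G` with root `v` and every real `x > 2`, with
`y = x/2 - √(x²/4 - 1)`: `λ₁(G, 0^∞) > -x` if and only if `A_G + xI - yE_{v,v}` is
positive definite. -/
theorem lam1_rowing_limit_gt_iff_posDef (G : RootedGraph) (x : ℝ) (hx : 2 < x)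
    (y : ℝ) (hy : y = x / 2 - Real.sqrt (x ^ 2 / 4 - 1)) (L : ℝ)
    (hL : Filter.Tendsto (fun n : ℕ => (G.rowing (List.replicate n 0)).lam1)
      Filter.atTop (nhds L)) :
    -x < L ↔
      (G.adjMat + x • (1 : Matrix G.V G.V ℝ) -
        y • Matrix.single G.root G.root 1).PosDef := by
  have hyb : y = ybar x := hy
  rw [hyb]
  show -x < L ↔ (G.Mmat x (ybar x)).PosDef
  constructor
  · intro h
    have hmax : max 2 (-L) < x := max_lt hx (by linarith)
    obtain ⟨x', hx'1, hx'2⟩ := exists_between hmax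
    have h2x' : 2 < x' := lt_of_le_of_lt (le_max_left _ _) hx'1
    have hLx' : -x' < L := by
      have := lt_of_le_of_lt (le_max_right (2:ℝ) (-L)) hx'1; linarith
    have hev : ∀ᶠ n in Filter.atTop, -x' < (G.rowing (List.replicate n 0)).lam1 :=
      hL.eventually (eventually_gt_nhds hLx')
    have hev2 : ∀ᶠ n in Filter.atTop, (G.Mmat x' (yseq x' n)).PosDef := by
      filter_upwards [hev, Filter.eventually_ge_atTop 1] with n h1 hn1
      have hne : Nonempty (G.rowing (List.replicate n 0)).V := by
        obtain ⟨m, rfl⟩ : ∃ m, n = m + 1 := ⟨n - 1, by omega⟩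
        rw [rowing_replicate_succ]
        exact rowing_nonempty _ _ ⟨Sum.inr none⟩
      rw [lam1_gt_iff _ hne x'] at h1
      exact (induction_pd h2x' n G).mp h1
    refine Matrix.PosDef.of_dotProduct_mulVec_pos (G.Mmat_isHermitian x (ybar x)) fun u hu => ?_
    rw [star_trivial, RootedGraph.Mmat_form]
    have hformlim : 0 ≤ u ⬝ᵥ (G.adjMat *ᵥ u) + x' * (u ⬝ᵥ u) - ybar x' * (u G.root)^2 := by
      have htend : Filter.Tendsto
          (fun n => u ⬝ᵥ (G.adjMat *ᵥ u) + x' * (u ⬝ᵥ u) - yseq x' n * (u G.root)^2)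
          Filter.atTop
          (nhds (u ⬝ᵥ (G.adjMat *ᵥ u) + x' * (u ⬝ᵥ u) - ybar x' * (u G.root)^2)) :=
        Filter.Tendsto.sub tendsto_const_nhds ((yseq_tendsto h2x').mul_const _)
      apply ge_of_tendsto htend
      filter_upwards [hev2] with n hpd
      have h2 := hpd.dotProduct_mulVec_pos hu
      rw [star_trivial, RootedGraph.Mmat_form] at h2
      linarith
    have hanti : ybar x ≤ ybar x' := ybar_anti h2x' hx'2.le
    have hdp := dotp_self_pos hu
    have t1 : (ybar x' - ybar x) * (u G.root)^2 ≥ 0 :=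
      mul_nonneg (by linarith) (sq_nonneg _)
    have t2 : 0 < (x - x') * (u ⬝ᵥ u) := mul_pos (by linarith) hdp
    nlinarith [hformlim, t1, t2]
  · intro h
    obtain ⟨c, hc, hbound⟩ := posDef_bound h
    have hcont : Filter.Tendsto (fun s => (x - s) + (ybar s - ybar x))
        (nhdsWithin x (Set.Iio x)) (nhds 0) := by
      have hc2 : Continuous (fun s => (x - s) + (ybar s - ybar x)) :=
        (continuous_const.sub continuous_id).add (ybar_continuous.sub continuous_const)
      have := Filter.Tendsto.mono_left (hc2.tendsto x) (nhdsWithin_le_nhds (s := Set.Iio x))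
      simpa using this
    have hevc : ∀ᶠ s in nhdsWithin x (Set.Iio x), (x - s) + (ybar s - ybar x) < c :=
      hcont.eventually (eventually_lt_nhds hc)
    have hev2 : ∀ᶠ s in nhdsWithin x (Set.Iio x), 2 < s :=
      ((eventually_gt_nhds hx).filter_mono nhdsWithin_le_nhds)
    have hev3 : ∀ᶠ s in nhdsWithin x (Set.Iio x), s < x :=
      eventually_mem_nhdsWithin.mono (fun s hs => hs)
    obtain ⟨x', h1, h2, h3⟩ := (hevc.and (hev2.and hev3)).exists
    have hpd' : (G.Mmat x' (ybar x')).PosDef := by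
      refine Matrix.PosDef.of_dotProduct_mulVec_pos (G.Mmat_isHermitian _ _) fun u hu => ?_
      rw [star_trivial, RootedGraph.Mmat_form]
      have hb := hbound u
      rw [RootedGraph.Mmat_form] at hb
      have hr : (u G.root)^2 ≤ u ⬝ᵥ u := by
        rw [sq]
        exact Finset.single_le_sum (f := fun i => u i * u i)
          (fun i _ => mul_self_nonneg _) (Finset.mem_univ _)
      have hanti : ybar x ≤ ybar x' := ybar_anti h2 h3.le
      have hdp := dotp_self_pos hu
      have t1 : (ybar x' - ybar x) * (u G.root)^2 ≤ (ybar x' - ybar x) * (u ⬝ᵥ u) :=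
        mul_le_mul_of_nonneg_left hr (by linarith)
      have t2 : ((x - x') + (ybar x' - ybar x)) * (u ⬝ᵥ u) < c * (u ⬝ᵥ u) :=
        mul_lt_mul_of_pos_right h1 hdp
      nlinarith [hb, t1, t2]
    have hall : ∀ n : ℕ, 1 ≤ n → -x' ≤ (G.rowing (List.replicate n 0)).lam1 := by
      intro n hn
      have hne : Nonempty (G.rowing (List.replicate n 0)).V := by
        obtain ⟨m, rfl⟩ : ∃ m, n = m + 1 := ⟨n - 1, by omega⟩
        rw [rowing_replicate_succ]
        exact rowing_nonempty _ _ ⟨Sum.inr none⟩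
      refine le_of_lt ?_
      rw [lam1_gt_iff _ hne x']
      exact (induction_pd h2 n G).mpr (Mmat_mono G x' (yseq_bounds h2 n).2 hpd')
    have hfinal : -x' ≤ L := by
      apply ge_of_tendsto hL
      filter_upwards [Filter.eventually_ge_atTop 1] with n hn
      exact hall n hn
    linarith
end
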